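/- arXiv:1603.05430 — 4 statements merged into one kernel-verified Lean document; each statement's English description precedes it below -/
import Mathlib

section
/- Let n, d ≥ 1 and r ≥ 1. Suppose that the set Σ_{n,2d}(r) of sums of r squares of degree-d forms has nonempty interior in ℝ[x_1,…,x_n]_{2d}, and that there exists a form f ∈ Σ_{n,2d} with ℓ(f) ≥ r. Then the set {f ∈ Σ_{n,2d} : ℓ(f) = r} of forms of sum of squares length exactly r has nonempty interior in ℝ[x_1,…,x_n]_{2d}. (Hence the set of typical sos lengths is exactly {t(n,2d), t(n,2d)+1, …, p(n,2d)}.) -/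
open MvPolynomial

noncomputable section

/-- `f` is a sum of `r` squares of forms of degree `d` in `n` variables. -/
def IsSOS (n d r : ℕ) (f : MvPolynomial (Fin n) ℝ) : Prop :=
  ∃ p : Fin r → MvPolynomial (Fin n) ℝ,
    (∀ i, (p i).IsHomogeneous d) ∧ f = ∑ i, p i ^ 2

/-- `f` lies in `Σ_{n,2d}`: it is a sum of squares of forms of degree `d`. -/
def InSigma (n d : ℕ) (f : MvPolynomial (Fin n) ℝ) : Prop :=
  ∃ r, IsSOS n d r f

/-- The sum of squares length `ℓ(f)`. -/
def sosLength (n d : ℕ) (f : MvPolynomial (Fin n) ℝ) : ℕ :=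
  sInf {r | IsSOS n d r f}

/-- The coefficientwise topology on polynomials; on each finite-dimensional
subspace of forms of fixed degree it induces the standard topology. -/
instance (n : ℕ) : TopologicalSpace (MvPolynomial (Fin n) ℝ) :=
  TopologicalSpace.induced (fun f (m : Fin n →₀ ℕ) => MvPolynomial.coeff m f) inferInstance

namespace SOSAux

variable {n : ℕ}

abbrev Poly (n : ℕ) := MvPolynomial (Fin n) ℝ

lemma continuous_coeff (m : Fin n →₀ ℕ) : Continuous fun f : Poly n => coeff m f :=
  (continuous_apply m).comp continuous_induced_dom

lemma continuous_into {X : Type*} [TopologicalSpace X] {g : X → Poly n}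
    (h : ∀ m, Continuous fun x => coeff m (g x)) : Continuous g := by
  rw [continuous_induced_rng]
  exact continuous_pi h

instance : T2Space (Poly n) := by
  have : Function.Injective (fun (f : Poly n) (m : Fin n →₀ ℕ) => MvPolynomial.coeff m f) := by
    intro f g h
    exact MvPolynomial.ext _ _ fun m => congrFun h m
  exact Topology.IsEmbedding.t2Space ⟨Topology.IsInducing.induced _, this⟩


/-- The finite set of exponents of degree exactly `e`. -/
def expSet (n e : ℕ) : Finset (Fin n →₀ ℕ) :=
  ((Finsupp.finite_of_degree_le e).toFinset).filter fun m => m.degree = e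

lemma mem_expSet {e : ℕ} {m : Fin n →₀ ℕ} : m ∈ expSet n e ↔ m.degree = e := by
  simp only [expSet, Finset.mem_filter, Set.Finite.mem_toFinset, Set.mem_setOf_eq]
  exact ⟨fun h => h.2, fun h => ⟨le_of_eq h, h⟩⟩

lemma support_subset_expSet {e : ℕ} {f : Poly n} (hf : f.IsHomogeneous e) :
    f.support ⊆ expSet n e := by
  intro m hm
  rw [mem_expSet]
  have := hf (MvPolynomial.mem_support_iff.mp hm)
  rwa [Finsupp.degree_eq_weight_one]

/-- The polynomial with prescribed coefficients on degree-`e` exponents. -/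
def theta (n e : ℕ) (a : expSet n e → ℝ) : Poly n :=
  ∑ m : expSet n e, monomial m.1 (a m)

lemma theta_isHomogeneous (e : ℕ) (a : expSet n e → ℝ) : (theta n e a).IsHomogeneous e := by
  have : theta n e a ∈ homogeneousSubmodule (Fin n) ℝ e := by
    apply Submodule.sum_mem
    intro m _
    rw [mem_homogeneousSubmodule]
    exact isHomogeneous_monomial _ (mem_expSet.mp m.2)
  rwa [mem_homogeneousSubmodule] at this

lemma coeff_theta {e : ℕ} (u : Fin n →₀ ℕ) (a : expSet n e → ℝ) :
    coeff u (theta n e a) = if h : u ∈ expSet n e then a ⟨u, h⟩ else 0 := by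
  rw [theta, MvPolynomial.coeff_sum]
  by_cases h : u ∈ expSet n e
  · rw [dif_pos h, Finset.sum_eq_single_of_mem ⟨u, h⟩ (Finset.mem_univ _)]
    · rw [coeff_monomial, if_pos rfl]
    · intro b _ hb
      rw [coeff_monomial, if_neg]
      exact fun hc => hb (Subtype.ext hc.symm).symm
      -- careful with direction
  · rw [dif_neg h]
    apply Finset.sum_eq_zero
    intro b _
    rw [coeff_monomial, if_neg]
    exact fun hc => h (hc ▸ b.2)

lemma theta_coeff {e : ℕ} {f : Poly n} (hf : f.IsHomogeneous e) :
    theta n e (fun m => coeff m.1 f) = f := by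
  apply MvPolynomial.ext
  intro u
  rw [coeff_theta]
  by_cases h : u ∈ expSet n e
  · rw [dif_pos h]
  · rw [dif_neg h]
    by_contra hc
    exact h (support_subset_expSet hf (MvPolynomial.mem_support_iff.mpr fun w => hc w.symm))


/-- Evaluation at `x` as a linear map on coefficient vectors of degree-`e` forms. -/
def evalL (n e : ℕ) (x : Fin n → ℝ) : (expSet n e → ℝ) →ₗ[ℝ] ℝ :=
  ∑ m : expSet n e, (m.1.prod fun i k => x i ^ k) • LinearMap.proj m

lemma evalL_apply (e : ℕ) (x : Fin n → ℝ) (a : expSet n e → ℝ) :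
    evalL n e x a = ∑ m : expSet n e, (m.1.prod fun i k => x i ^ k) * a m := by
  rw [evalL]
  simp [LinearMap.sum_apply]

lemma evalL_eq_eval (e : ℕ) (x : Fin n → ℝ) (a : expSet n e → ℝ) :
    evalL n e x a = eval x (theta n e a) := by
  rw [evalL_apply, theta, map_sum]
  apply Finset.sum_congr rfl
  intro m _
  rw [eval_monomial, mul_comm]

lemma continuous_evalL (e : ℕ) (x : Fin n → ℝ) : Continuous (evalL n e x) := by
  have : (evalL n e x : (expSet n e → ℝ) → ℝ)
      = fun a => ∑ m : expSet n e, (m.1.prod fun i k => x i ^ k) * a m :=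
    funext fun a => evalL_apply e x a
  rw [this]
  exact continuous_finset_sum _ fun m _ => (continuous_const.mul (continuous_apply m))

/-- A finite set of points such that a degree-`e` form vanishing at all of them is zero. -/
lemma exists_eval_finset (e : ℕ) :
    ∃ F : Finset (Fin n → ℝ), ∀ a : expSet n e → ℝ,
      (∀ x ∈ F, evalL n e x a = 0) → a = 0 := by
  suffices h : ∀ (N : ℕ) (U : Submodule ℝ (expSet n e → ℝ)), Module.finrank ℝ U ≤ N →
      ∃ F : Finset (Fin n → ℝ), ∀ a ∈ U, (∀ x ∈ F, evalL n e x a = 0) → a = 0 by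
    obtain ⟨F, hF⟩ := h (Module.finrank ℝ (⊤ : Submodule ℝ (expSet n e → ℝ))) ⊤ le_rfl
    exact ⟨F, fun a ha => hF a Submodule.mem_top ha⟩
  intro N
  induction N with
  | zero =>
    intro U hU
    refine ⟨∅, fun a ha _ => ?_⟩
    have : U = ⊥ := Submodule.finrank_eq_zero.mp (Nat.le_zero.mp hU)
    simpa [this] using ha
  | succ N ih =>
    intro U hU
    by_cases hz : ∀ a ∈ U, a = 0
    · exact ⟨∅, fun a ha _ => hz a ha⟩
    · push_neg at hz
      obtain ⟨a₀, ha₀U, ha₀⟩ := hz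
      have hθ : theta n e a₀ ≠ 0 := by
        intro hc
        apply ha₀
        funext m
        have := coeff_theta m.1 a₀
        rw [hc, coeff_zero, dif_pos m.2] at this
        exact this.symm
      have : ∃ x₀ : Fin n → ℝ, eval x₀ (theta n e a₀) ≠ 0 := by
        by_contra hc
        push_neg at hc
        exact hθ (MvPolynomial.funext fun x => by rw [hc x, map_zero])
      obtain ⟨x₀, hx₀⟩ := this
      set U' : Submodule ℝ (expSet n e → ℝ) := U ⊓ LinearMap.ker (evalL n e x₀) with hU'
      have hlt : U' < U := by
        refine lt_of_le_of_ne inf_le_left fun hc => ?_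
        have : a₀ ∈ U' := hc ▸ ha₀U
        rw [hU', Submodule.mem_inf, LinearMap.mem_ker, evalL_eq_eval] at this
        exact hx₀ this.2
      have hrk : Module.finrank ℝ U' ≤ N := by
        have := Submodule.finrank_lt_finrank_of_lt hlt
        omega
      obtain ⟨F, hF⟩ := ih U' hrk
      refine ⟨insert x₀ F, fun a haU hav => ?_⟩
      apply hF a
      · rw [hU', Submodule.mem_inf, LinearMap.mem_ker]
        exact ⟨haU, hav x₀ (Finset.mem_insert_self _ _)⟩
      · exact fun x hx => hav x (Finset.mem_insert_of_mem hx)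


lemma expSet_nonempty (hn : 1 ≤ n) (e : ℕ) : (expSet n e).Nonempty := by
  refine ⟨Finsupp.single ⟨0, hn⟩ e, mem_expSet.mpr ?_⟩
  by_cases he : e = 0
  · subst he; simp [Finsupp.degree]
  · rw [Finsupp.degree_single]

section Quadratic

variable (F : Finset (Fin n → ℝ)) (e : ℕ)

/-- The positive definite quadratic form `a ↦ ∑_{x ∈ F} (eval x (θ a))²`. -/
def gq (a : expSet n e → ℝ) : ℝ := ∑ x ∈ F, (evalL n e x a) ^ 2

lemma gq_nonneg (a : expSet n e → ℝ) : 0 ≤ gq F e a :=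
  Finset.sum_nonneg fun x _ => sq_nonneg _

lemma gq_continuous : Continuous (gq F e) :=
  continuous_finset_sum _ fun x _ => (continuous_evalL e x).pow 2

lemma gq_smul (t : ℝ) (a : expSet n e → ℝ) : gq F e (t • a) = t ^ 2 * gq F e a := by
  rw [gq, gq, Finset.mul_sum]
  exact Finset.sum_congr rfl fun x _ => by rw [map_smul, smul_eq_mul, mul_pow]

lemma isCompact_gq_le (hn : 1 ≤ n)
    (hF : ∀ a : expSet n e → ℝ, (∀ x ∈ F, evalL n e x a = 0) → a = 0) (c : ℝ) :
    IsCompact {a : expSet n e → ℝ | gq F e a ≤ c} := by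
  have hne : (expSet n e).Nonempty := expSet_nonempty hn e
  have : Nontrivial (expSet n e → ℝ) := by
    obtain ⟨m, hm⟩ := hne
    exact ⟨0, Function.update 0 (⟨m, hm⟩ : expSet n e) 1, fun hc => by
      have := congrFun hc ⟨m, hm⟩
      simp [Function.update_self] at this⟩
  -- minimum of gq on the unit sphere
  obtain ⟨a₁, ha₁, hmin⟩ := (isCompact_sphere (0 : expSet n e → ℝ) 1).exists_isMinOn
    (NormedSpace.sphere_nonempty.mpr zero_le_one) ((gq_continuous F e).continuousOn)
  set m₀ := gq F e a₁ with hm₀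
  have hm₀pos : 0 < m₀ := by
    rcases lt_or_eq_of_le (gq_nonneg F e a₁) with h | h
    · exact h
    · exfalso
      have ha₁0 : a₁ = 0 := by
        apply hF
        intro x hx
        have : (evalL n e x a₁) ^ 2 = 0 := by
          have h1 : ∀ y ∈ F, (0:ℝ) ≤ (evalL n e y a₁)^2 := fun y _ => sq_nonneg _
          have := (Finset.sum_eq_zero_iff_of_nonneg h1).mp h.symm x hx
          exact this
        exact pow_eq_zero_iff two_ne_zero |>.mp this
      rw [ha₁0] at ha₁
      simp at ha₁
  -- gq a ≥ m₀ * ‖a‖²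
  have key : ∀ a : expSet n e → ℝ, m₀ * ‖a‖ ^ 2 ≤ gq F e a := by
    intro a
    by_cases ha : a = 0
    · simp [ha, gq, map_zero]
    · have hna : ‖a‖ ≠ 0 := norm_ne_zero_iff.mpr ha
      have hsph : ‖a‖⁻¹ • a ∈ Metric.sphere (0 : expSet n e → ℝ) 1 := by
        simp [norm_smul, abs_of_nonneg (inv_nonneg.mpr (norm_nonneg a)),
          inv_mul_cancel₀ hna]
      have hmina : m₀ ≤ gq F e (‖a‖⁻¹ • a) := hmin hsph
      have h2 : gq F e (‖a‖⁻¹ • a) = ‖a‖⁻¹ ^ 2 * gq F e a := gq_smul F e _ _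
      rw [h2] at hmina
      have h3 : m₀ * ‖a‖ ^ 2 ≤ (‖a‖⁻¹ ^ 2 * gq F e a) * ‖a‖ ^ 2 := by
        apply mul_le_mul_of_nonneg_right hmina (sq_nonneg _)
      calc m₀ * ‖a‖ ^ 2 ≤ (‖a‖⁻¹ ^ 2 * gq F e a) * ‖a‖ ^ 2 := h3
        _ = gq F e a := by field_simp
  apply IsCompact.of_isClosed_subset (isCompact_closedBall (0 : expSet n e → ℝ)
    (Real.sqrt (max c 0 / m₀)))
  · exact isClosed_le (gq_continuous F e) continuous_const
  · intro a ha
    simp only [Set.mem_setOf_eq] at ha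
    rw [Metric.mem_closedBall, dist_zero_right]
    have h1 : m₀ * ‖a‖ ^ 2 ≤ max c 0 := le_trans (key a) (le_trans ha (le_max_left c 0))
    have h2 : ‖a‖ ^ 2 ≤ max c 0 / m₀ := by
      rw [le_div_iff₀ hm₀pos]; linarith [h1]
    have := Real.sqrt_le_sqrt h2
    rwa [Real.sqrt_sq (norm_nonneg a)] at this

end Quadratic


section Closed

variable (n d : ℕ)

abbrev Wsub (n d : ℕ) := homogeneousSubmodule (Fin n) ℝ (2 * d)

/-- The set `Σ_{n,2d}(k)` inside the space of degree-`2d` forms. -/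
def SOSset (k : ℕ) : Set (Wsub n d) := {f | IsSOS n d k f.1}

variable {n d}

lemma sq_mem_W {p : Poly n} (hp : p.IsHomogeneous d) :
    p ^ 2 ∈ homogeneousSubmodule (Fin n) ℝ (2 * d) := by
  rw [mem_homogeneousSubmodule, pow_two, two_mul]
  exact hp.mul hp

lemma continuous_eval_W (x : Fin n → ℝ) : Continuous fun g : Wsub n d => eval x (g.1 : Poly n) := by
  have : (fun g : Wsub n d => eval x (g.1 : Poly n))
      = fun g => evalL n (2*d) x (fun m => coeff m.1 (g.1 : Poly n)) := by
    funext g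
    rw [evalL_eq_eval, theta_coeff ((mem_homogeneousSubmodule _ _).mp g.2)]
  rw [this]
  exact (continuous_evalL _ x).comp
    (continuous_pi fun m => (continuous_coeff m.1).comp continuous_subtype_val)

lemma continuous_coeff_theta (e : ℕ) (u : Fin n →₀ ℕ) :
    Continuous fun a : expSet n e → ℝ => coeff u (theta n e a) := by
  simp only [coeff_theta]
  by_cases h : u ∈ expSet n e
  · simpa only [dif_pos h] using continuous_apply _
  · simpa only [dif_neg h] using continuous_const

/-- The sum-of-`k`-squares map from coefficient vectors into degree-`2d` forms. -/
def Psi (k : ℕ) (a : Fin k → (expSet n d → ℝ)) : Wsub n d :=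
  ⟨∑ i, (theta n d (a i)) ^ 2,
    Submodule.sum_mem _ fun i _ => sq_mem_W (theta_isHomogeneous d (a i))⟩

lemma continuous_Psi (k : ℕ) : Continuous (Psi (n := n) (d := d) k) := by
  apply Continuous.subtype_mk
  apply continuous_into
  intro m
  have : (fun a : Fin k → (expSet n d → ℝ) => coeff m (∑ i, (theta n d (a i)) ^ 2))
      = fun a => ∑ i, ∑ p ∈ Finset.HasAntidiagonal.antidiagonal m,
          coeff p.1 (theta n d (a i)) * coeff p.2 (theta n d (a i)) := by
    funext a
    rw [MvPolynomial.coeff_sum]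
    apply Finset.sum_congr rfl
    intro i _
    rw [pow_two, MvPolynomial.coeff_mul]
  rw [this]
  refine continuous_finset_sum _ fun i _ => continuous_finset_sum _ fun p _ => Continuous.mul ?_ ?_
  · exact (continuous_coeff_theta d p.1).comp (continuous_apply i)
  · exact (continuous_coeff_theta d p.2).comp (continuous_apply i)

theorem isClosed_SOSset (hn : 1 ≤ n) (F : Finset (Fin n → ℝ))
    (hF : ∀ a : expSet n d → ℝ, (∀ x ∈ F, evalL n d x a = 0) → a = 0) (k : ℕ) :
    IsClosed (SOSset n d k) := by
  apply isClosed_of_closure_subset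
  intro f hf
  set L : Wsub n d → ℝ := fun g => ∑ x ∈ F, eval x (g.1 : Poly n) with hL
  set c : ℝ := L f + 1 with hc
  set O : Set (Wsub n d) := {g | L g < c} with hO
  have hOopen : IsOpen O :=
    isOpen_lt (continuous_finset_sum _ fun x _ => continuous_eval_W x) continuous_const
  have hfO : f ∈ O := by simp only [hO, Set.mem_setOf_eq, hc]; linarith
  set K : Set (Fin k → (expSet n d → ℝ)) := Set.univ.pi fun _ => {b | gq F d b ≤ c} with hK
  have hKcomp : IsCompact K := isCompact_univ_pi fun i => isCompact_gq_le F d hn hF c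
  have hsub : SOSset n d k ∩ O ⊆ Psi k '' K := by
    rintro g ⟨⟨p, hp, hgp⟩, hgO⟩
    set a : Fin k → (expSet n d → ℝ) := fun i m => coeff m.1 (p i) with ha
    have hθ : ∀ i, theta n d (a i) = p i := fun i => theta_coeff (hp i)
    have hLg : L g = ∑ i, gq F d (a i) := by
      rw [hL]
      have : ∀ x : Fin n → ℝ, eval x (g.1 : Poly n) = ∑ i, (evalL n d x (a i)) ^ 2 := by
        intro x
        rw [hgp, map_sum]
        apply Finset.sum_congr rfl
        intro i _
        rw [map_pow, evalL_eq_eval, hθ]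
      simp only [this]
      rw [Finset.sum_comm]
      rfl
    have hbound : ∀ i, gq F d (a i) ≤ c := by
      intro i
      have h1 : gq F d (a i) ≤ L g := by
        rw [hLg]
        exact Finset.single_le_sum (fun j _ => gq_nonneg F d (a j)) (Finset.mem_univ i)
      exact le_trans h1 (le_of_lt hgO)
    refine ⟨a, fun i _ => hbound i, ?_⟩
    apply Subtype.ext
    show (∑ i, (theta n d (a i)) ^ 2) = (g.1 : Poly n)
    rw [hgp]
    exact Finset.sum_congr rfl fun i _ => by rw [hθ]
  have hcl : f ∈ closure (SOSset n d k ∩ O) := by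
    rw [mem_closure_iff] at hf ⊢
    intro o ho hfo
    obtain ⟨g, hgo, hgS⟩ := hf (o ∩ O) (ho.inter hOopen) ⟨hfo, hfO⟩
    exact ⟨g, hgo.1, hgS, hgo.2⟩
  have himg : f ∈ Psi k '' K :=
    (IsCompact.image hKcomp (continuous_Psi k)).isClosed.closure_subset
      ((closure_mono hsub) hcl)
  obtain ⟨a, _, haf⟩ := himg
  exact ⟨fun i => theta n d (a i), fun i => theta_isHomogeneous d (a i),
    by rw [← haf]; rfl⟩

end Closed


section SOSLemmas

variable {n d : ℕ}

lemma IsSOS.mono {r r' : ℕ} {f : Poly n} (h : IsSOS n d r f) (hrr : r ≤ r') :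
    IsSOS n d r' f := by
  obtain ⟨p, hp, hf⟩ := h
  set q : ℕ → Poly n := fun i => if h2 : i < r then p ⟨i, h2⟩ else 0 with hq
  refine ⟨fun i => q i.1, fun i => ?_, ?_⟩
  · rw [hq]
    by_cases h2 : i.1 < r
    · simpa only [dif_pos h2] using hp _
    · simpa only [dif_neg h2] using isHomogeneous_zero _ _ _
  · rw [hf, Fin.sum_univ_eq_sum_range (fun i => q i ^ 2) r',
      ← Finset.sum_subset (Finset.range_subset_range.mpr hrr)
        (fun i _ hi => by
          simp only [Finset.mem_range, not_lt] at hi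
          show (if h2 : i < r then p ⟨i, h2⟩ else 0) ^ 2 = 0
          rw [dif_neg (by omega)]; exact zero_pow two_ne_zero),
      ← Fin.sum_univ_eq_sum_range (fun i => q i ^ 2) r]
    apply Finset.sum_congr rfl
    intro i _
    rw [hq]
    simp only [dif_pos i.isLt, Fin.eta]

lemma sosLength_le {k : ℕ} {f : Poly n} (h : IsSOS n d k f) : sosLength n d f ≤ k :=
  Nat.sInf_le h

lemma isSOS_of_length_le {k : ℕ} {f : Poly n} (hf : InSigma n d f)
    (h : sosLength n d f ≤ k) : IsSOS n d k f :=
  IsSOS.mono (Nat.sInf_mem hf) h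

lemma IsSOS.add_sq {k : ℕ} {f : Poly n} (h : IsSOS n d k f) {q : Poly n}
    (hq : q.IsHomogeneous d) : IsSOS n d (k + 1) (f + q ^ 2) := by
  obtain ⟨p, hp, hf⟩ := h
  refine ⟨Fin.snoc p q, fun i => ?_, ?_⟩
  · refine Fin.lastCases ?_ ?_ i
    · rw [Fin.snoc_last]; exact hq
    · intro j; rw [Fin.snoc_castSucc]; exact hp j
  · rw [Fin.sum_univ_castSucc]
    simp only [Fin.snoc_castSucc, Fin.snoc_last]
    rw [hf]

lemma IsSOS.smul {k : ℕ} {f : Poly n} (h : IsSOS n d k f) {t : ℝ} (ht : 0 ≤ t) :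
    IsSOS n d k (t • f) := by
  obtain ⟨p, hp, hf⟩ := h
  refine ⟨fun i => Real.sqrt t • p i, fun i => ?_, ?_⟩
  · exact (mem_homogeneousSubmodule _ _).mp
      (Submodule.smul_mem _ _ ((mem_homogeneousSubmodule _ _).mpr (hp i)))
  · rw [hf, Finset.smul_sum]
    apply Finset.sum_congr rfl
    intro i _
    rw [smul_pow, Real.sq_sqrt ht]

end SOSLemmas

end SOSAux

open SOSAux

/-- If `Σ_{n,2d}(r)` has nonempty interior and some sum of squares has length
`≥ r`, then the set of forms of sos length exactly `r` has nonempty interior in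
`ℝ[x_1,…,x_n]_{2d}`; hence every `r` between the minimal typical length and
`p(n,2d)` is a typical sos length. -/
theorem typical_lengths (n d r : ℕ) (hn : 1 ≤ n) (hd : 1 ≤ d) (hr : 1 ≤ r)
    (hint : (interior {f : MvPolynomial.homogeneousSubmodule (Fin n) ℝ (2 * d) |
      IsSOS n d r (f : MvPolynomial (Fin n) ℝ)}).Nonempty)
    (hlong : ∃ f : MvPolynomial (Fin n) ℝ, InSigma n d f ∧ r ≤ sosLength n d f) :
    (interior {f : MvPolynomial.homogeneousSubmodule (Fin n) ℝ (2 * d) |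
      InSigma n d (f : MvPolynomial (Fin n) ℝ) ∧
        sosLength n d (f : MvPolynomial (Fin n) ℝ) = r}).Nonempty := by
  obtain ⟨r', rfl⟩ : ∃ r', r = r' + 1 := ⟨r - 1, (Nat.succ_pred_eq_of_pos hr).symm⟩
  obtain ⟨F, hF⟩ := SOSAux.exists_eval_finset (n := n) d
  have hclosed : IsClosed (SOSset n d r') := isClosed_SOSset hn F hF r'
  obtain ⟨f₀, hf0S, hf₀len⟩ := hlong
  obtain ⟨m, p₀, hp₀, hf₀eq⟩ := hf0S
  have hf0S' : InSigma n d f₀ := ⟨m, p₀, hp₀, hf₀eq⟩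
  have hf₀mem : f₀ ∈ homogeneousSubmodule (Fin n) ℝ (2 * d) := by
    rw [hf₀eq]
    exact Submodule.sum_mem _ fun i _ => sq_mem_W (hp₀ i)
  have hf₀not : ¬ IsSOS n d r' f₀ := fun h => by
    have := sosLength_le h; omega
  have hintS : (interior (SOSset n d (r' + 1))).Nonempty := hint
  by_cases hcase : interior (SOSset n d (r' + 1)) ⊆ SOSset n d r'
  · -- contradiction branch
    exfalso
    obtain ⟨u₀, hu₀⟩ := hintS
    have h0 : interior (SOSset n d (r' + 1)) ⊆ interior (SOSset n d r') :=
      interior_maximal hcase isOpen_interior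
    have hu₀' : u₀ ∈ interior (SOSset n d r') := h0 hu₀
    -- adding a square preserves interiority
    have key : ∀ (q : Poly n) (hq : q.IsHomogeneous d), ∀ u : Wsub n d,
        u ∈ interior (SOSset n d r') → ∀ v : Wsub n d,
        (v.1 : Poly n) = u.1 + q ^ 2 → v ∈ interior (SOSset n d r') := by
      intro q hq u hu v hv
      set S : Wsub n d → Wsub n d := fun g => ⟨g.1 - q ^ 2, sub_mem g.2 (sq_mem_W hq)⟩ with hS
      have hScont : Continuous S := by
        apply Continuous.subtype_mk
        apply continuous_into
        intro mm
        simp only [MvPolynomial.coeff_sub]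
        exact (((continuous_coeff mm).comp continuous_subtype_val).sub continuous_const)
      set O : Set (Wsub n d) := S ⁻¹' (interior (SOSset n d r')) with hO
      have hOopen : IsOpen O := hScont.isOpen_preimage _ isOpen_interior
      have hOsub : O ⊆ SOSset n d (r' + 1) := by
        intro g hg
        have h0 : S g ∈ SOSset n d r' := interior_subset hg
        have h1 : IsSOS n d r' ((g.1 : Poly n) - q ^ 2) := h0
        have h2 := SOSAux.IsSOS.add_sq h1 hq
        rwa [sub_add_cancel] at h2
      have hOsub2 : O ⊆ interior (SOSset n d r') :=
        interior_maximal (le_trans (interior_maximal hOsub hOopen) hcase) hOopen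
      apply hOsub2
      show S v ∈ interior (SOSset n d r')
      have hSv : S v = u := by
        apply Subtype.ext
        show (v.1 : Poly n) - q ^ 2 = u.1
        rw [hv, add_sub_cancel_right]
      rwa [hSv]
    have keyscale : ∀ t : ℝ, 0 < t → ∀ u : Wsub n d, u ∈ interior (SOSset n d r') →
        ∀ v : Wsub n d, (v.1 : Poly n) = t • u.1 → v ∈ interior (SOSset n d r') := by
      intro t ht u hu v hv
      set S : Wsub n d → Wsub n d := fun g => ⟨t⁻¹ • g.1, Submodule.smul_mem _ _ g.2⟩ with hS
      have hScont : Continuous S := by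
        apply Continuous.subtype_mk
        apply continuous_into
        intro mm
        simp only [MvPolynomial.coeff_smul]
        exact continuous_const.mul ((continuous_coeff mm).comp continuous_subtype_val)
      set O : Set (Wsub n d) := S ⁻¹' (interior (SOSset n d r')) with hO
      have hOopen : IsOpen O := hScont.isOpen_preimage _ isOpen_interior
      have hOsub : O ⊆ SOSset n d r' := by
        intro g hg
        have h0 : S g ∈ SOSset n d r' := interior_subset hg
        have h1 : IsSOS n d r' (t⁻¹ • (g.1 : Poly n)) := h0
        have h2 := SOSAux.IsSOS.smul h1 (le_of_lt ht)
        rwa [smul_smul, mul_inv_cancel₀ (ne_of_gt ht), one_smul] at h2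
      have hOsub2 : O ⊆ interior (SOSset n d r') := interior_maximal hOsub hOopen
      apply hOsub2
      show S v ∈ interior (SOSset n d r')
      have hSv : S v = u := by
        apply Subtype.ext
        show t⁻¹ • (v.1 : Poly n) = u.1
        rw [hv, smul_smul, inv_mul_cancel₀ (ne_of_gt ht), one_smul]
      rwa [hSv]
    -- adding any sum of squares preserves interiority
    have chain : ∀ (k : ℕ) (p : Fin k → Poly n), (∀ i, (p i).IsHomogeneous d) →
        ∀ u : Wsub n d, u ∈ interior (SOSset n d r') → ∀ v : Wsub n d,
        (v.1 : Poly n) = u.1 + ∑ i, p i ^ 2 → v ∈ interior (SOSset n d r') := by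
      intro k
      induction k with
      | zero =>
        intro p hp u hu v hv
        have : v = u := by
          apply Subtype.ext
          rw [hv]; simp
        rwa [this]
      | succ k ih =>
        intro p hp u hu v hv
        set w : Wsub n d := ⟨u.1 + ∑ i : Fin k, p i.castSucc ^ 2,
          add_mem u.2 (Submodule.sum_mem _ fun i _ => sq_mem_W (hp i.castSucc))⟩ with hw
        have h1 := ih (fun i => p i.castSucc) (fun i => hp _) u hu w rfl
        apply key (p (Fin.last k)) (hp _) w h1 v
        show (v.1 : Poly n) = (u.1 + ∑ i : Fin k, p i.castSucc ^ 2) + p (Fin.last k) ^ 2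
        rw [hv, Fin.sum_univ_castSucc, add_assoc]
    -- pass to the limit t → 0⁺
    set γ : ℝ → Wsub n d := fun t =>
      ⟨t • u₀.1 + f₀, add_mem (Submodule.smul_mem _ t u₀.2) hf₀mem⟩ with hγ
    have hγcont : Continuous γ := by
      apply Continuous.subtype_mk
      apply continuous_into
      intro mm
      simp only [MvPolynomial.coeff_add, MvPolynomial.coeff_smul, smul_eq_mul]
      exact (continuous_id.mul continuous_const).add continuous_const
    have hγ0 : γ 0 = ⟨f₀, hf₀mem⟩ := by
      apply Subtype.ext
      show (0 : ℝ) • (u₀.1 : Poly n) + f₀ = f₀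
      rw [zero_smul, zero_add]
    have htend : Filter.Tendsto γ (nhdsWithin 0 (Set.Ioi 0)) (nhds (⟨f₀, hf₀mem⟩ : Wsub n d)) := by
      have := hγcont.tendsto 0
      rw [hγ0] at this
      exact this.mono_left nhdsWithin_le_nhds
    have hev : ∀ᶠ t in nhdsWithin (0:ℝ) (Set.Ioi 0), γ t ∈ SOSset n d r' := by
      apply eventually_nhdsWithin_of_forall
      intro t ht
      set w : Wsub n d := ⟨t • u₀.1, Submodule.smul_mem _ t u₀.2⟩ with hw
      have h1 := keyscale t ht u₀ hu₀' w rfl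
      have h2 := chain m p₀ hp₀ w h1 (γ t)
        (by show (t • (u₀.1 : Poly n) + f₀) = t • (u₀.1 : Poly n) + ∑ i, p₀ i ^ 2
            rw [hf₀eq])
      exact interior_subset h2
    have : (⟨f₀, hf₀mem⟩ : Wsub n d) ∈ SOSset n d r' := hclosed.mem_of_tendsto htend hev
    exact hf₀not this
  · -- main branch: produce an interior point of length exactly r' + 1
    obtain ⟨u, huInt, huNot⟩ := Set.not_subset.mp hcase
    set O : Set (Wsub n d) := interior (SOSset n d (r' + 1)) ∩ (SOSset n d r')ᶜ with hO
    have hOopen : IsOpen O := isOpen_interior.inter hclosed.isOpen_compl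
    have hOsub : O ⊆ {f : Wsub n d | InSigma n d (f : Poly n) ∧
        sosLength n d (f : Poly n) = r' + 1} := by
      rintro g ⟨hg1, hg2⟩
      have hgS0 : g ∈ SOSset n d (r' + 1) := interior_subset hg1
      have hgS : IsSOS n d (r' + 1) (g.1 : Poly n) := hgS0
      have hgSig : InSigma n d (g.1 : Poly n) := ⟨r' + 1, hgS⟩
      refine ⟨hgSig, ?_⟩
      have h1 : sosLength n d (g.1 : Poly n) ≤ r' + 1 := sosLength_le hgS
      have h2 : ¬ sosLength n d (g.1 : Poly n) ≤ r' := fun hc => hg2 (isSOS_of_length_le hgSig hc)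
      omega
    exact ⟨u, interior_maximal hOsub hOopen ⟨huInt, huNot⟩⟩
end
end

section
/- Let d ≥ 1. There exists a finite set Z ⊂ ℝ³ ∖ {0} of binom(d+1, 2) pairwise non-proportional points (i.e. binom(d+1,2) distinct points of the real projective plane) such that every form f of degree 2d in ℝ[x_1,x_2,x_3] that is a sum of squares of forms of degree d and vanishes at every point of Z has a unique sum of squares representation up to orthogonal equivalence: whenever f = p_1² + ⋯ + p_m² = q_1² + ⋯ + q_m² with p_i, q_i forms of degree d (representations of different lengths being padded with zeros to a common length m), there exists a real orthogonal m×m matrix u = (u_{ij}) with q_j = Σ_{i=1}^m u_{ij} p_i for all j. -/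
noncomputable section
namespace SOSU
open scoped Matrix

abbrev R1 : Type := Polynomial ℝ
abbrev T2 : Type := Polynomial R1

def Ap (j d : ℕ) : T2 :=
  Polynomial.C (∏ k ∈ Finset.Ioc j d, (Polynomial.X - Polynomial.C (k : ℝ)))

def Bb (j : ℕ) : R1 := ∏ i ∈ Finset.Icc 1 j, (Polynomial.X - Polynomial.C (i : ℝ))

def Bp (j : ℕ) : T2 := Polynomial.map Polynomial.C (Bb j)

def bet (j d : ℕ) : T2 := Ap j d * Bp j

def mx (r : ℝ) : T2 →+* R1 := Polynomial.mapRingHom (Polynomial.evalRingHom r)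

def ev2 (k i : ℝ) : T2 →+* ℝ := (Polynomial.evalRingHom i).comp (mx k)

def TD (f : T2) (n : ℕ) : Prop := ∀ b, f.coeff b ≠ 0 → (f.coeff b).natDegree + b ≤ n

lemma mx_C (r : ℝ) (s : R1) : mx r (Polynomial.C s) = Polynomial.C (s.eval r) := by
  simp [mx]

lemma mx_coeff (r : ℝ) (f : T2) (b : ℕ) :
    (mx r f).coeff b = (f.coeff b).eval r := by
  simp [mx, Polynomial.coeff_map]

lemma mx_smul (r c : ℝ) (f : T2) : mx r (c • f) = c • mx r f := by
  ext b
  simp [mx_coeff, Polynomial.coeff_smul, smul_eq_mul]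

lemma mx_Bp (r : ℝ) (j : ℕ) : mx r (Bp j) = Bb j := by
  have h : (Polynomial.evalRingHom r).comp (Polynomial.C : ℝ →+* R1) = RingHom.id ℝ := by
    ext x; simp
  simp [mx, Bp, Polynomial.map_map, h]

lemma mx_Ap (r : ℝ) (j d : ℕ) :
    mx r (Ap j d) = Polynomial.C (∏ k ∈ Finset.Ioc j d, (r - (k : ℝ))) := by
  rw [Ap, mx_C]
  simp [Polynomial.eval_prod]

lemma Bb_monic (j : ℕ) : (Bb j).Monic :=
  Polynomial.monic_prod_of_monic _ _ (fun i _ => Polynomial.monic_X_sub_C _)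

lemma Bb_ne_zero (j : ℕ) : Bb j ≠ 0 := (Bb_monic j).ne_zero

lemma Bb_natDegree (j : ℕ) : (Bb j).natDegree = j := by
  rw [Bb, Polynomial.natDegree_prod]
  · rw [Finset.sum_congr rfl (fun i _ => Polynomial.natDegree_X_sub_C _)]
    simp
  · intro i _; exact Polynomial.X_sub_C_ne_zero _

lemma dist_indep : ∀ (n : ℕ) (e : ℕ → ℝ),
    (∑ j ∈ Finset.range n, e j • Bb j) = 0 → ∀ j < n, e j = 0 := by
  intro n
  induction n with
  | zero => intro e _ j hj; omega
  | succ n ih =>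
    intro e hsum j hj
    have htop : e n = 0 := by
      have h0 := congrArg (fun p => Polynomial.coeff p n) hsum
      simp only [Polynomial.finset_sum_coeff, Polynomial.coeff_smul, smul_eq_mul,
        Polynomial.coeff_zero] at h0
      rw [Finset.sum_range_succ] at h0
      have hlt : ∀ m ∈ Finset.range n, e m * (Bb m).coeff n = 0 := by
        intro m hm
        rw [Polynomial.coeff_eq_zero_of_natDegree_lt, mul_zero]
        rw [Bb_natDegree]; exact Finset.mem_range.mp hm
      rw [Finset.sum_eq_zero hlt, zero_add] at h0
      have : (Bb n).coeff n = 1 := by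
        have := (Bb_monic n).coeff_natDegree
        rwa [Bb_natDegree] at this
      rwa [this, mul_one] at h0
    rcases Nat.lt_succ_iff_lt_or_eq.mp hj with h | h
    · refine ih e ?_ j h
      rw [Finset.sum_range_succ, htop, zero_smul, add_zero] at hsum
      exact hsum
    · rwa [h]

lemma roots_dvd : ∀ (s : Finset ℕ) (g : R1), (∀ i ∈ s, g.eval (i : ℝ) = 0) →
    (∏ i ∈ s, (Polynomial.X - Polynomial.C (i : ℝ))) ∣ g := by
  intro s
  induction s using Finset.induction_on with
  | empty => intro g _; simpa using one_dvd g
  | insert a s hnotmem ih =>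
    intro g hg
    have ha : (Polynomial.X - Polynomial.C (a : ℝ)) ∣ g := by
      rw [Polynomial.dvd_iff_isRoot]
      exact hg a (Finset.mem_insert_self a s)
    obtain ⟨g1, rfl⟩ := ha
    rw [Finset.prod_insert hnotmem]
    refine mul_dvd_mul_left _ (ih g1 ?_)
    intro i hi
    have := hg i (Finset.mem_insert_of_mem hi)
    rw [Polynomial.eval_mul, Polynomial.eval_sub, Polynomial.eval_X, Polynomial.eval_C] at this
    have hia : i ≠ a := fun h => hnotmem (h ▸ hi)
    have hne : (i : ℝ) - (a : ℝ) ≠ 0 := sub_ne_zero.mpr (by exact_mod_cast hia)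
    exact (mul_eq_zero.mp this).resolve_left hne

lemma algMap (c : ℝ) : (algebraMap ℝ T2) c = Polynomial.C (Polynomial.C c) := by
  rw [Polynomial.algebraMap_apply, Polynomial.algebraMap_apply]
  simp

lemma smul_helper (c : ℝ) (f : T2) : c • f = Polynomial.C (Polynomial.C c) * f := by
  rw [Algebra.smul_def, algMap]

-- Basic structural lemmas
lemma Ap_self (d : ℕ) : Ap d d = 1 := by simp [Ap]

lemma Bp_zero : Bp 0 = 1 := by simp [Bp, Bb]

lemma bet_dd (d : ℕ) : bet d d = Bp d := by rw [bet, Ap_self, one_mul]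

lemma bet_zero : bet 0 0 = 1 := by rw [bet_dd, Bp_zero]

lemma Ap_succ {j d : ℕ} (h : j ≤ d) :
    Ap j (d+1) = Ap j d * Polynomial.C (Polynomial.X - Polynomial.C ((d+1 : ℕ) : ℝ)) := by
  rw [Ap, Ap, ← map_mul, Finset.prod_Ioc_succ_top h]

lemma bet_succ {j d : ℕ} (h : j ≤ d) :
    bet j (d+1) = Polynomial.C (Polynomial.X - Polynomial.C ((d+1 : ℕ) : ℝ)) * bet j d := by
  rw [bet, bet, Ap_succ h]; ring


lemma ev2_apply (k i : ℝ) (f : T2) : ev2 k i f = (mx k f).eval i := rfl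

lemma ev2_smul (k i c : ℝ) (f : T2) : ev2 k i (c • f) = c * ev2 k i f := by
  rw [smul_helper, map_mul, ev2_apply, mx_C]
  simp [← ev2_apply]

lemma ev2_Bp (k i : ℝ) (j : ℕ) :
    ev2 k i (Bp j) = ∏ i' ∈ Finset.Icc 1 j, (i - (i' : ℝ)) := by
  rw [ev2_apply, mx_Bp, Bb, Polynomial.eval_prod]
  simp

lemma ev2_Bp_zero (k : ℝ) {i j : ℕ} (h1 : 1 ≤ i) (h2 : i ≤ j) :
    ev2 k (i : ℝ) (Bp j) = 0 := by
  rw [ev2_Bp]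
  apply Finset.prod_eq_zero (Finset.mem_Icc.mpr ⟨h1, h2⟩)
  simp

lemma ev2_CXC (k i r : ℝ) :
    ev2 k i (Polynomial.C (Polynomial.X - Polynomial.C r)) = k - r := by
  rw [ev2_apply, mx_C]; simp

lemma TD_sub {f g : T2} {n : ℕ} (hf : TD f n) (hg : TD g n) : TD (f - g) n := by
  intro b hb
  rcases eq_or_ne (f.coeff b) 0 with h0 | h0
  · rw [Polynomial.coeff_sub, h0, zero_sub] at hb ⊢
    rw [Polynomial.natDegree_neg]
    exact hg b (fun hz => hb (by rw [hz, neg_zero]))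
  rcases eq_or_ne (g.coeff b) 0 with h1 | h1
  · rw [Polynomial.coeff_sub, h1, sub_zero]; exact hf b h0
  · rw [Polynomial.coeff_sub]
    have := Polynomial.natDegree_sub_le (f.coeff b) (g.coeff b)
    have h2 := hf b h0
    have h3 := hg b h1
    omega

lemma TD_CC_mul_Bp (c : ℝ) (j : ℕ) : TD (Polynomial.C (Polynomial.C c) * Bp j) j := by
  intro b hb
  have hco : (Polynomial.C (Polynomial.C c) * Bp j).coeff b
      = Polynomial.C c * Polynomial.C ((Bb j).coeff b) := by
    rw [Polynomial.coeff_C_mul, Bp, Polynomial.coeff_map]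
  rw [hco] at hb ⊢
  rw [← map_mul, Polynomial.natDegree_C, zero_add]
  by_contra hlt
  have : (Bb j).coeff b = 0 := by
    apply Polynomial.coeff_eq_zero_of_natDegree_lt
    rw [Bb_natDegree]; omega
  rw [this, map_zero, mul_zero] at hb
  exact hb rfl

lemma span2 : ∀ (d : ℕ) (f : T2), TD f d →
    (∀ k i : ℕ, 1 ≤ i → i ≤ k → k ≤ d → ev2 (k : ℝ) (i : ℝ) f = 0) →
    ∃ c : ℕ → ℝ, f = ∑ j ∈ Finset.range (d+1), c j • bet j d := by
  intro d
  induction d with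
  | zero =>
    intro f hTD _
    have h0 : (f.coeff 0).natDegree = 0 := by
      by_cases h : f.coeff 0 = 0
      · rw [h]; simp
      · have := hTD 0 h; omega
    obtain ⟨a, ha⟩ := Polynomial.natDegree_eq_zero.mp h0
    refine ⟨fun _ => a, ?_⟩
    rw [Finset.sum_range_one, bet_zero, smul_helper, mul_one]
    refine Polynomial.ext fun b => ?_
    rcases Nat.eq_zero_or_pos b with rfl | hb
    · rw [Polynomial.coeff_C]; simpa using ha.symm
    · rw [Polynomial.coeff_C, if_neg (by omega)]
      by_contra hne
      have := hTD b hne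
      omega
  | succ d ih =>
    intro f hTD hvan
    set r : ℝ := ((d + 1 : ℕ) : ℝ) with hr
    set g : R1 := mx r f with hg
    have hgdeg : g.natDegree ≤ d + 1 := by
      apply Polynomial.natDegree_le_iff_coeff_eq_zero.mpr
      intro b hb
      rw [hg, mx_coeff]
      rcases eq_or_ne (f.coeff b) 0 with h0 | h0
      · rw [h0]; simp
      · have := hTD b h0; omega
    have hdvd : Bb (d+1) ∣ g := by
      apply roots_dvd
      intro i hi
      rw [Finset.mem_Icc] at hi
      have := hvan (d+1) i hi.1 hi.2 le_rfl
      rwa [ev2_apply] at this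
    obtain ⟨qq, hq⟩ := hdvd
    have hqc : ∃ c : ℝ, qq = Polynomial.C c := by
      rcases eq_or_ne qq 0 with h0 | h0
      · exact ⟨0, by rw [h0]; simp⟩
      · have hdeg : g.natDegree = (d+1) + qq.natDegree := by
          rw [hq, Polynomial.natDegree_mul (Bb_ne_zero _) h0, Bb_natDegree]
        have : qq.natDegree = 0 := by omega
        obtain ⟨a, ha⟩ := Polynomial.natDegree_eq_zero.mp this
        exact ⟨a, ha.symm⟩
    obtain ⟨c, rfl⟩ := hqc
    set f' : T2 := f - Polynomial.C (Polynomial.C c) * bet (d+1) (d+1) with hf'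
    have hmxf' : mx r f' = 0 := by
      rw [hf', map_sub, map_mul, mx_C, bet_dd, mx_Bp, ← hg, hq]
      simp [mul_comm]
    have hdvd2 : Polynomial.C (Polynomial.X - Polynomial.C r) ∣ f' := by
      rw [Polynomial.C_dvd_iff_dvd_coeff]
      intro b
      rw [Polynomial.dvd_iff_isRoot]
      have := congrArg (fun p => Polynomial.coeff p b) hmxf'
      simpa [mx_coeff] using this
    obtain ⟨f1, hf1⟩ := hdvd2
    have hcoeff : ∀ b, f'.coeff b = (Polynomial.X - Polynomial.C r) * f1.coeff b := by
      intro b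
      rw [hf1, Polynomial.coeff_C_mul]
    have hTDf' : TD f' (d+1) := by
      apply TD_sub hTD
      rw [bet_dd]
      exact TD_CC_mul_Bp c (d+1)
    have hTD1 : TD f1 d := by
      intro b hb
      have hb' : f'.coeff b ≠ 0 := by
        rw [hcoeff b]
        exact mul_ne_zero (Polynomial.X_sub_C_ne_zero r) hb
      have := hTDf' b hb'
      rw [hcoeff b, Polynomial.natDegree_mul (Polynomial.X_sub_C_ne_zero r) hb,
        Polynomial.natDegree_X_sub_C] at this
      omega
    have hvan1 : ∀ k i : ℕ, 1 ≤ i → i ≤ k → k ≤ d → ev2 (k:ℝ) (i:ℝ) f1 = 0 := by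
      intro k i h1 h2 h3
      have h4 : ev2 (k:ℝ) (i:ℝ) f' = 0 := by
        rw [hf', map_sub, map_mul, bet_dd]
        rw [hvan k i h1 h2 (le_trans h3 (Nat.le_succ d))]
        rw [ev2_Bp_zero _ h1 (le_trans h2 (le_trans h3 (Nat.le_succ d)))]
        ring
      rw [hf1, map_mul, ev2_CXC] at h4
      have hne : (k:ℝ) - r ≠ 0 := by
        rw [hr, sub_ne_zero]
        exact_mod_cast Nat.ne_of_lt (by omega)
      exact (mul_eq_zero.mp h4).resolve_left hne
    obtain ⟨c', hc'⟩ := ih f1 hTD1 hvan1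
    refine ⟨fun j => if j = d+1 then c else c' j, ?_⟩
    rw [Finset.sum_range_succ]
    beta_reduce
    rw [if_pos rfl]
    have hterm : ∀ j ∈ Finset.range (d+1),
        (if j = d+1 then c else c' j) • bet j (d+1)
          = Polynomial.C (Polynomial.X - Polynomial.C r) * (c' j • bet j d) := by
      intro j hj
      have hjle : j ≤ d := Nat.lt_succ_iff.mp (Finset.mem_range.mp hj)
      rw [if_neg (by omega), bet_succ hjle, mul_smul_comm]
    rw [Finset.sum_congr rfl hterm, ← Finset.mul_sum, ← hc', ← hf1]
    rw [hf', smul_helper]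
    ring

lemma double_sum_split (n : ℕ) (F : ℕ → ℕ → T2) :
    (∑ j ∈ Finset.range (n+1), ∑ k ∈ Finset.range (n+1), F j k)
      = (∑ j ∈ Finset.range n, ∑ k ∈ Finset.range n, F j k)
        + (∑ j ∈ Finset.range n, F j n)
        + ((∑ k ∈ Finset.range n, F n k) + F n n) := by
  rw [Finset.sum_range_succ]
  rw [Finset.sum_congr rfl (fun j _ => Finset.sum_range_succ (F j) n)]
  rw [Finset.sum_add_distrib, Finset.sum_range_succ (F n) n]
  try ring
  try abel

lemma mx_bet (r : ℝ) (j d : ℕ) :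
    mx r (bet j d) = Polynomial.C (∏ k ∈ Finset.Ioc j d, (r - (k:ℝ))) * Bb j := by
  rw [bet, map_mul, mx_Ap, mx_Bp]

lemma aprod_ne {j d : ℕ} (h : j ≤ d) :
    (∏ k ∈ Finset.Ioc j d, (((d+1 : ℕ):ℝ) - (k:ℝ))) ≠ 0 := by
  rw [Finset.prod_ne_zero_iff]
  intro k hk
  rw [Finset.mem_Ioc] at hk
  rw [sub_ne_zero]
  exact_mod_cast Nat.ne_of_gt (by omega)

lemma mx_bet_zero {j d : ℕ} (h : j ≤ d) :
    mx (((d+1 : ℕ):ℝ)) (bet j (d+1)) = 0 := by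
  rw [mx_bet]
  have hz : (∏ k ∈ Finset.Ioc j (d+1), ((((d+1):ℕ):ℝ) - (k:ℝ))) = 0 := by
    apply Finset.prod_eq_zero (Finset.mem_Ioc.mpr ⟨Nat.lt_succ_of_le h, le_rfl⟩)
    simp
  rw [hz]
  simp

lemma lam_ne (r : ℝ) : (Polynomial.C (Polynomial.X - Polynomial.C r) : T2) ≠ 0 := by
  rw [Ne, Polynomial.C_eq_zero]
  exact Polynomial.X_sub_C_ne_zero r

lemma smul_lam2 (lam : T2) (e : ℝ) (a b : T2) :
    e • ((lam * a) * (lam * b)) = lam * (lam * (e • (a * b))) := by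
  rw [mul_smul_comm, mul_smul_comm]
  congr 1
  ring

lemma smul_C_mul (e a : ℝ) (x : R1) :
    e • (Polynomial.C a * x) = (e * a) • x := by
  rw [Polynomial.smul_eq_C_mul, Polynomial.smul_eq_C_mul, map_mul, mul_assoc]

set_option maxHeartbeats 1000000 in
lemma indep2 : ∀ (d : ℕ) (c : ℕ → ℕ → ℝ), (∀ j k, c j k = c k j) →
    (∑ j ∈ Finset.range (d+1), ∑ k ∈ Finset.range (d+1),
      c j k • (bet j d * bet k d)) = 0 →
    ∀ j k, j ≤ d → k ≤ d → c j k = 0 := by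
  intro d
  induction d with
  | zero =>
    intro c _ hsum j k hj hk
    interval_cases j
    interval_cases k
    rw [Finset.sum_range_one, Finset.sum_range_one, bet_zero, mul_one, smul_helper,
      mul_one] at hsum
    exact Polynomial.C_eq_zero.mp (Polynomial.C_eq_zero.mp hsum)
  | succ d ih =>
    intro c hsym hsum
    set r : ℝ := ((d + 1 : ℕ) : ℝ) with hr
    rw [double_sum_split] at hsum
    -- Step A : corner coefficient
    have htop : c (d+1) (d+1) = 0 := by
      have h0 := congrArg (mx r) hsum
      rw [map_zero, map_add, map_add, map_add] at h0
      have e1 : mx r (∑ j ∈ Finset.range (d+1), ∑ k ∈ Finset.range (d+1),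
          c j k • (bet j (d+1) * bet k (d+1))) = 0 := by
        rw [map_sum, Finset.sum_eq_zero]
        intro j hj
        rw [map_sum, Finset.sum_eq_zero]
        intro k hk
        rw [mx_smul, map_mul, mx_bet_zero (Nat.lt_succ_iff.mp (Finset.mem_range.mp hj))]
        simp
      have e2 : mx r (∑ j ∈ Finset.range (d+1),
          c j (d+1) • (bet j (d+1) * bet (d+1) (d+1))) = 0 := by
        rw [map_sum, Finset.sum_eq_zero]
        intro j hj
        rw [mx_smul, map_mul, mx_bet_zero (Nat.lt_succ_iff.mp (Finset.mem_range.mp hj))]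
        simp
      have e3 : mx r (∑ k ∈ Finset.range (d+1),
          c (d+1) k • (bet (d+1) (d+1) * bet k (d+1))) = 0 := by
        rw [map_sum, Finset.sum_eq_zero]
        intro k hk
        rw [mx_smul, map_mul, mx_bet_zero (Nat.lt_succ_iff.mp (Finset.mem_range.mp hk)),
          mul_zero]
        simp
      rw [e1, e2, e3, zero_add, zero_add, zero_add] at h0
      rw [mx_smul, map_mul, bet_dd, mx_Bp] at h0
      rcases smul_eq_zero.mp h0 with h | h
      · exact h
      · exact absurd h (mul_ne_zero (Bb_ne_zero _) (Bb_ne_zero _))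
    -- Step B : factor out lam
    have hP1 : (∑ j ∈ Finset.range (d+1), ∑ k ∈ Finset.range (d+1),
        c j k • (bet j (d+1) * bet k (d+1)))
        = Polynomial.C (Polynomial.X - Polynomial.C r) *
          (Polynomial.C (Polynomial.X - Polynomial.C r) *
            (∑ j ∈ Finset.range (d+1), ∑ k ∈ Finset.range (d+1),
              c j k • (bet j d * bet k d))) := by
      rw [Finset.mul_sum]
      rw [Finset.sum_congr rfl (fun j _ => (Finset.mul_sum _ _ _))]
      rw [Finset.mul_sum]
      rw [Finset.sum_congr rfl (fun j _ => (Finset.mul_sum _ _ _))]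
      apply Finset.sum_congr rfl
      intro j hj
      apply Finset.sum_congr rfl
      intro k hk
      rw [bet_succ (Nat.lt_succ_iff.mp (Finset.mem_range.mp hj)),
        bet_succ (Nat.lt_succ_iff.mp (Finset.mem_range.mp hk)), smul_lam2]
    have hP2 : (∑ j ∈ Finset.range (d+1),
        c j (d+1) • (bet j (d+1) * bet (d+1) (d+1)))
        = Polynomial.C (Polynomial.X - Polynomial.C r) *
          (∑ j ∈ Finset.range (d+1), c j (d+1) • (bet j d * Bp (d+1))) := by
      rw [Finset.mul_sum]
      apply Finset.sum_congr rfl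
      intro j hj
      rw [bet_succ (Nat.lt_succ_iff.mp (Finset.mem_range.mp hj)), bet_dd, mul_smul_comm]
      rw [mul_assoc]
    have hP3 : (∑ k ∈ Finset.range (d+1),
        c (d+1) k • (bet (d+1) (d+1) * bet k (d+1)))
        = Polynomial.C (Polynomial.X - Polynomial.C r) *
          (∑ j ∈ Finset.range (d+1), c j (d+1) • (bet j d * Bp (d+1))) := by
      rw [Finset.mul_sum]
      apply Finset.sum_congr rfl
      intro k hk
      rw [bet_succ (Nat.lt_succ_iff.mp (Finset.mem_range.mp hk)), bet_dd, mul_smul_comm,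
        hsym (d+1) k]
      rw [mul_comm (Bp (d+1)), mul_assoc]
    rw [hP1, hP2, hP3, htop, zero_smul, add_zero] at hsum
    have hbr : Polynomial.C (Polynomial.X - Polynomial.C r) *
        ((Polynomial.C (Polynomial.X - Polynomial.C r) *
            (∑ j ∈ Finset.range (d+1), ∑ k ∈ Finset.range (d+1),
              c j k • (bet j d * bet k d)))
          + ((∑ j ∈ Finset.range (d+1), c j (d+1) • (bet j d * Bp (d+1)))
            + (∑ j ∈ Finset.range (d+1), c j (d+1) • (bet j d * Bp (d+1))))) = 0 := by
      linear_combination hsum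
    have hbr2 : (Polynomial.C (Polynomial.X - Polynomial.C r) *
            (∑ j ∈ Finset.range (d+1), ∑ k ∈ Finset.range (d+1),
              c j k • (bet j d * bet k d)))
          + ((∑ j ∈ Finset.range (d+1), c j (d+1) • (bet j d * Bp (d+1)))
            + (∑ j ∈ Finset.range (d+1), c j (d+1) • (bet j d * Bp (d+1)))) = 0 :=
      (mul_eq_zero.mp hbr).resolve_left (lam_ne r)
    -- Step C : evaluate at x = d+1 again
    have hmxSB : mx r (∑ j ∈ Finset.range (d+1), c j (d+1) • (bet j d * Bp (d+1)))
        = (∑ j ∈ Finset.range (d+1),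
            (c j (d+1) * ∏ k ∈ Finset.Ioc j d, (r - (k:ℝ))) • Bb j) * Bb (d+1) := by
      rw [map_sum, Finset.sum_mul]
      apply Finset.sum_congr rfl
      intro j hj
      rw [mx_smul, map_mul, mx_bet, mx_Bp, mul_assoc, smul_C_mul, smul_mul_assoc]
    have hC := congrArg (mx r) hbr2
    rw [map_zero, map_add, map_add, map_mul, hmxSB] at hC
    have hmxlam : mx r (Polynomial.C (Polynomial.X - Polynomial.C r)) = 0 := by
      rw [mx_C]
      simp
    rw [hmxlam, zero_mul, zero_add] at hC
    have hSB0 : (∑ j ∈ Finset.range (d+1),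
        (c j (d+1) * ∏ k ∈ Finset.Ioc j d, (r - (k:ℝ))) • Bb j) = 0 := by
      have h2 : ((∑ j ∈ Finset.range (d+1),
          (c j (d+1) * ∏ k ∈ Finset.Ioc j d, (r - (k:ℝ))) • Bb j) * Bb (d+1)) = 0 :=
        add_self_eq_zero.mp hC
      exact (mul_eq_zero.mp h2).resolve_right (Bb_ne_zero _)
    have hside : ∀ j, j ≤ d → c j (d+1) = 0 := by
      intro j hj
      have := dist_indep (d+1) _ hSB0 j (Nat.lt_succ_of_le hj)
      rcases mul_eq_zero.mp this with h | h
      · exact h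
      · exact absurd h (aprod_ne hj)
    -- Step D : inner sum vanishes, apply induction hypothesis
    have hSBzero : (∑ j ∈ Finset.range (d+1), c j (d+1) • (bet j d * Bp (d+1))) = 0 := by
      apply Finset.sum_eq_zero
      intro j hj
      rw [hside j (Nat.lt_succ_iff.mp (Finset.mem_range.mp hj)), zero_smul]
    rw [hSBzero, add_zero, add_zero] at hbr2
    have hS2 : (∑ j ∈ Finset.range (d+1), ∑ k ∈ Finset.range (d+1),
        c j k • (bet j d * bet k d)) = 0 :=
      (mul_eq_zero.mp hbr2).resolve_left (lam_ne r)
    have hinner := ih c hsym hS2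
    intro j k hj hk
    rcases Nat.lt_succ_iff_lt_or_eq.mp (Nat.lt_succ_of_le hj) with hj' | hj' <;>
      rcases Nat.lt_succ_iff_lt_or_eq.mp (Nat.lt_succ_of_le hk) with hk' | hk'
    · exact hinner j k (by omega) (by omega)
    · rw [hk']; exact hside j (by omega)
    · rw [hj', hsym]; exact hside k (by omega)
    · rw [hj', hk']; exact htop

def Phi : MvPolynomial (Fin 3) ℝ →ₐ[ℝ] T2 :=
  MvPolynomial.aeval ![Polynomial.C Polynomial.X, Polynomial.X, 1]

lemma Phi_monomial (m : Fin 3 →₀ ℕ) (r : ℝ) :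
    Phi (MvPolynomial.monomial m r)
      = Polynomial.C (Polynomial.C r * Polynomial.X ^ (m 0)) * Polynomial.X ^ (m 1) := by
  rw [Phi, MvPolynomial.aeval_monomial]
  rw [Finsupp.prod_fintype _ _ (fun i => pow_zero _)]
  rw [Fin.prod_univ_three]
  simp only [Matrix.cons_val_zero, Matrix.cons_val_one, Matrix.head_cons,
    Matrix.cons_val_two, Matrix.tail_cons, one_pow, mul_one]
  rw [algMap, ← Polynomial.C_pow, ← mul_assoc, ← map_mul]

lemma coeff2_term (r : ℝ) (a b a' b' : ℕ) :
    ((Polynomial.C (Polynomial.C r * Polynomial.X ^ a') * Polynomial.X ^ b' : T2).coeff b).coeff a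
      = if a' = a ∧ b' = b then r else 0 := by
  rw [Polynomial.coeff_C_mul, Polynomial.coeff_X_pow]
  by_cases hb : b = b'
  · subst hb
    rw [if_pos rfl, mul_one, Polynomial.coeff_C_mul, Polynomial.coeff_X_pow]
    by_cases ha : a = a'
    · subst ha
      rw [if_pos rfl, if_pos ⟨rfl, rfl⟩, mul_one]
    · rw [if_neg ha, if_neg (fun h => ha h.1.symm), mul_zero]
  · rw [if_neg hb, mul_zero, Polynomial.coeff_zero,
      if_neg (fun h => hb h.2.symm)]

lemma coeff_coeff_Phi (h : MvPolynomial (Fin 3) ℝ) (a b : ℕ) :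
    ((Phi h).coeff b).coeff a
      = ∑ m ∈ h.support, (if m 0 = a ∧ m 1 = b then MvPolynomial.coeff m h else 0) := by
  conv_lhs => rw [h.as_sum, map_sum]
  rw [Polynomial.finset_sum_coeff, Polynomial.finset_sum_coeff]
  apply Finset.sum_congr rfl
  intro m _
  rw [Phi_monomial, coeff2_term]

lemma deg3 (m : Fin 3 →₀ ℕ) : m.degree = m 0 + m 1 + m 2 := by
  have : m.degree = ∑ i : Fin 3, m i := by
    rw [Finsupp.degree]
    apply Finset.sum_subset (Finset.subset_univ _)
    intro i _ hi
    exact Finsupp.notMem_support_iff.mp hi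
  rw [this, Fin.sum_univ_three]

lemma hom_sum3 {h : MvPolynomial (Fin 3) ℝ} {n : ℕ} (hh : h.IsHomogeneous n)
    {m : Fin 3 →₀ ℕ} (hm : MvPolynomial.coeff m h ≠ 0) : m 0 + m 1 + m 2 = n := by
  by_contra hcon
  exact hm (hh.coeff_eq_zero (by rw [deg3]; omega))

lemma collapse {h : MvPolynomial (Fin 3) ℝ} {n : ℕ} (hh : h.IsHomogeneous n)
    {m : Fin 3 →₀ ℕ} (hm : m ∈ h.support) :
    ((Phi h).coeff (m 1)).coeff (m 0) = MvPolynomial.coeff m h := by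
  rw [coeff_coeff_Phi]
  rw [Finset.sum_eq_single m]
  · rw [if_pos ⟨rfl, rfl⟩]
  · intro m' hm' hne
    by_cases hc : m' 0 = m 0 ∧ m' 1 = m 1
    · exfalso
      apply hne
      have e1 := hom_sum3 hh (MvPolynomial.mem_support_iff.mp hm')
      have e2 := hom_sum3 hh (MvPolynomial.mem_support_iff.mp hm)
      ext i
      fin_cases i
      · exact hc.1
      · exact hc.2
      · show m' 2 = m 2
        omega
    · rw [if_neg hc]
  · intro hms
    exact absurd hm hms

lemma Phi_inj {h : MvPolynomial (Fin 3) ℝ} {n : ℕ} (hh : h.IsHomogeneous n)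
    (h0 : Phi h = 0) : h = 0 := by
  ext m
  rw [MvPolynomial.coeff_zero]
  by_cases hm : m ∈ h.support
  · rw [← collapse hh hm, h0]
    simp
  · exact MvPolynomial.notMem_support_iff.mp hm

lemma Phi_TD {h : MvPolynomial (Fin 3) ℝ} {n : ℕ} (hh : h.IsHomogeneous n) :
    TD (Phi h) n := by
  intro b hb
  set a := ((Phi h).coeff b).natDegree with ha
  have hne : ((Phi h).coeff b).coeff a ≠ 0 := by
    rw [ha]
    exact Polynomial.leadingCoeff_ne_zero.mpr hb
  by_contra hcon
  apply hne
  rw [coeff_coeff_Phi]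
  apply Finset.sum_eq_zero
  intro m hm
  by_cases hc : m 0 = a ∧ m 1 = b
  · exfalso
    have := hom_sum3 hh (MvPolynomial.mem_support_iff.mp hm)
    omega
  · rw [if_neg hc]

lemma ev2_Phi (k i : ℝ) (h : MvPolynomial (Fin 3) ℝ) :
    ev2 k i (Phi h) = MvPolynomial.eval ![k, i, 1] h := by
  induction h using MvPolynomial.induction_on with
  | C r =>
    rw [show Phi (MvPolynomial.C r) = algebraMap ℝ T2 r from MvPolynomial.aeval_C _ r,
      algMap]
    rw [ev2_apply, mx_C]
    simp
  | add p q hp hq =>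
    rw [map_add, map_add, hp, hq, map_add]
  | mul_X p n hp =>
    rw [map_mul, map_mul, hp, map_mul]
    congr 1
    rw [show Phi (MvPolynomial.X n) = ![Polynomial.C Polynomial.X, Polynomial.X, 1] n
      from MvPolynomial.aeval_X _ n]
    fin_cases n
    · show ev2 k i (Polynomial.C Polynomial.X)
        = MvPolynomial.eval ![k, i, 1] (MvPolynomial.X 0)
      rw [ev2_apply, mx_C]
      simp
    · show ev2 k i (Polynomial.X)
        = MvPolynomial.eval ![k, i, 1] (MvPolynomial.X 1)
      rw [ev2_apply]
      have hx : mx k (Polynomial.X : T2) = Polynomial.X := by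
        simp [mx]
      rw [hx]
      simp
    · show ev2 k i 1 = MvPolynomial.eval ![k, i, 1] (MvPolynomial.X 2)
      rw [map_one]
      simp

lemma toEuclideanLin_mul {a b c : ℕ} (M : Matrix (Fin a) (Fin b) ℝ)
    (N : Matrix (Fin b) (Fin c) ℝ) (x : EuclideanSpace ℝ (Fin c)) :
    Matrix.toEuclideanLin (M * N) x = Matrix.toEuclideanLin M (Matrix.toEuclideanLin N x) := by
  rw [Matrix.toEuclideanLin_apply, Matrix.toEuclideanLin_apply, Matrix.toEuclideanLin_apply]
  simp [Matrix.mulVec_mulVec]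

lemma toEuclideanLin_one {a : ℕ} (x : EuclideanSpace ℝ (Fin a)) :
    Matrix.toEuclideanLin (1 : Matrix (Fin a) (Fin a) ℝ) x = x := by
  rw [Matrix.toEuclideanLin_apply]
  simp

lemma real_transpose_eq_conjTranspose {a b : ℕ} (M : Matrix (Fin a) (Fin b) ℝ) :
    Mᵀ = Mᴴ := by
  ext i j
  simp [Matrix.conjTranspose_apply]

lemma orth_of_gram {m w : ℕ} (P Q : Matrix (Fin m) (Fin w) ℝ)
    (h : Pᵀ * P = Qᵀ * Q) :
    ∃ u : Matrix (Fin m) (Fin m) ℝ, uᵀ * u = 1 ∧ u * uᵀ = 1 ∧ Q = u * P := by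
  classical
  set A := Matrix.toEuclideanLin P with hA
  set B := Matrix.toEuclideanLin Q with hB
  have key : ∀ x y : EuclideanSpace ℝ (Fin w),
      (inner ℝ (A x) (A y) : ℝ) = inner ℝ (B x) (B y) := by
    intro x y
    have h1 : (inner ℝ (A x) (A y) : ℝ) = inner ℝ x (Matrix.toEuclideanLin (Pᵀ * P) y) := by
      rw [toEuclideanLin_mul, real_transpose_eq_conjTranspose,
        Matrix.toEuclideanLin_conjTranspose_eq_adjoint, LinearMap.adjoint_inner_right]
    have h2 : (inner ℝ (B x) (B y) : ℝ) = inner ℝ x (Matrix.toEuclideanLin (Qᵀ * Q) y) := by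
      rw [toEuclideanLin_mul, real_transpose_eq_conjTranspose,
        Matrix.toEuclideanLin_conjTranspose_eq_adjoint, LinearMap.adjoint_inner_right]
    rw [h1, h2, h]
  have hnorm : ∀ x, ‖A x‖ = ‖B x‖ := by
    intro x
    have hx := key x x
    rw [real_inner_self_eq_norm_sq, real_inner_self_eq_norm_sq] at hx
    exact (sq_eq_sq₀ (norm_nonneg _) (norm_nonneg _)).mp hx
  have hker : LinearMap.ker A ≤ LinearMap.ker B := by
    intro x hx
    rw [LinearMap.mem_ker] at hx ⊢
    rw [← norm_eq_zero, ← hnorm, hx, norm_zero]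
  set S := LinearMap.range A with hS
  set e := A.quotKerEquivRange with he
  set lQ := Submodule.liftQ (LinearMap.ker A) B hker with hlQ
  set L0 : S →ₗ[ℝ] EuclideanSpace ℝ (Fin m) := lQ ∘ₗ (e.symm : S →ₗ[ℝ] _) with hL0def
  have hL0 : ∀ (x : EuclideanSpace ℝ (Fin w)) (hx : A x ∈ S), L0 ⟨A x, hx⟩ = B x := by
    intro x hx
    have h1 : e.symm ⟨A x, hx⟩ = Submodule.Quotient.mk x := by
      rw [he, A.quotKerEquivRange_symm_apply_image x hx, Submodule.mkQ_apply]
    rw [hL0def, LinearMap.comp_apply, LinearEquiv.coe_coe, h1, hlQ, Submodule.liftQ_apply]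
  have hL0norm : ∀ s : S, ‖L0 s‖ = ‖s‖ := by
    rintro ⟨v, hv⟩
    obtain ⟨x, rfl⟩ := hv
    rw [hL0 x (LinearMap.mem_range_self A x), ← hnorm]
    rfl
  set L : S →ₗᵢ[ℝ] EuclideanSpace ℝ (Fin m) := ⟨L0, hL0norm⟩ with hL
  set φ := L.extend with hφdef
  have hφ : ∀ x, φ (A x) = B x := by
    intro x
    have h1 := L.extend_apply ⟨A x, LinearMap.mem_range_self A x⟩
    rw [← hφdef] at h1
    have h2 : L ⟨A x, LinearMap.mem_range_self A x⟩ = B x := hL0 x _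
    rw [← h2]
    exact h1
  set u : Matrix (Fin m) (Fin m) ℝ := Matrix.toEuclideanLin.symm φ.toLinearMap with hu
  have huφ : Matrix.toEuclideanLin u = φ.toLinearMap := by
    rw [hu, LinearEquiv.apply_symm_apply]
  have hQ : Q = u * P := by
    apply Matrix.toEuclideanLin.injective
    apply LinearMap.ext
    intro x
    rw [toEuclideanLin_mul, huφ, ← hA, ← hB]
    exact (hφ x).symm
  have huu : uᵀ * u = 1 := by
    apply Matrix.toEuclideanLin.injective
    apply LinearMap.ext
    intro x
    rw [toEuclideanLin_mul, toEuclideanLin_one, real_transpose_eq_conjTranspose,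
      Matrix.toEuclideanLin_conjTranspose_eq_adjoint, huφ]
    apply ext_inner_left ℝ
    intro y
    rw [LinearMap.adjoint_inner_right]
    exact φ.inner_map_map y x
  exact ⟨u, huu, mul_eq_one_comm.mp huu, hQ⟩

lemma sq_expand (d n : ℕ) (c : ℕ → ℝ) :
    (∑ j ∈ Finset.range n, c j • bet j d)^2
      = ∑ j ∈ Finset.range n, ∑ k ∈ Finset.range n,
          (c j * c k) • (bet j d * bet k d) := by
  rw [sq, Finset.sum_mul_sum]
  exact Finset.sum_congr rfl fun j _ =>
    Finset.sum_congr rfl fun k _ => smul_mul_smul_comm _ _ _ _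

lemma choose_two (d : ℕ) : (∑ j ∈ Finset.range d, (j+1)) = (d+1).choose 2 := by
  induction d with
  | zero => rfl
  | succ d ih =>
    rw [Finset.sum_range_succ, ih]
    have h := Nat.choose_succ_succ (d+1) 1
    rw [Nat.choose_one_right] at h
    norm_num at h ⊢
    omega

lemma vanish_of_sq_sum {m : ℕ} (p : Fin m → MvPolynomial (Fin 3) ℝ) (x : Fin 3 → ℝ)
    (hv : MvPolynomial.eval x (∑ i, p i ^ 2) = 0) (i : Fin m) :
    MvPolynomial.eval x (p i) = 0 := by
  rw [map_sum] at hv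
  have hterm : ∀ i : Fin m, MvPolynomial.eval x (p i ^ 2) = (MvPolynomial.eval x (p i))^2 :=
    fun i => map_pow _ _ _
  rw [Finset.sum_congr rfl (fun i _ => hterm i)] at hv
  have h0 := (Finset.sum_eq_zero_iff_of_nonneg (fun i _ => sq_nonneg _)).mp hv i
    (Finset.mem_univ i)
  exact sq_eq_zero_iff.mp h0

end SOSU

open MvPolynomial

/-- There is a set `Z` of `binom(d+1,2)` points of the real projective plane
(given by pairwise non-proportional nonzero vectors in `ℝ³`) such that every sum
of squares of degree-`d` forms vanishing on `Z` has a unique sum of squares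
representation up to orthogonal equivalence. -/
theorem unique_representation_on_general_points (d : ℕ) (hd : 1 ≤ d) :
    ∃ z : Fin ((d + 1).choose 2) → (Fin 3 → ℝ),
      (∀ j, z j ≠ 0) ∧
      (∀ j k, j ≠ k → ∀ c : ℝ, z j ≠ c • z k) ∧
      ∀ (m : ℕ) (p q : Fin m → MvPolynomial (Fin 3) ℝ),
        (∀ i, (p i).IsHomogeneous d) → (∀ i, (q i).IsHomogeneous d) →
        (∑ i, p i ^ 2 = ∑ i, q i ^ 2) →
        (∀ j, eval (z j) (∑ i, p i ^ 2) = 0) →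
        ∃ u : Matrix (Fin m) (Fin m) ℝ, u * u.transpose = 1 ∧
          ∀ k, q k = ∑ i, u i k • p i := by
  classical
  open SOSU in
  have hcard : Fintype.card (Σ k : Fin d, Fin (k.val + 1)) = (d+1).choose 2 := by
    rw [Fintype.card_sigma]
    simp only [Fintype.card_fin]
    rw [Fin.sum_univ_eq_sum_range (fun j => j + 1) d]
    exact SOSU.choose_two d
  set e := Fintype.equivFinOfCardEq hcard with he
  set z : Fin ((d+1).choose 2) → (Fin 3 → ℝ) := fun t =>
    ![(((e.symm t).1.val + 1 : ℕ) : ℝ), (((e.symm t).2.val + 1 : ℕ) : ℝ), 1] with hz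
  have hz2 : ∀ t, z t 2 = 1 := fun t => rfl
  have hz0 : ∀ t, z t 0 = (((e.symm t).1.val + 1 : ℕ) : ℝ) := fun t => rfl
  have hz1 : ∀ t, z t 1 = (((e.symm t).2.val + 1 : ℕ) : ℝ) := fun t => rfl
  refine ⟨z, ?_, ?_, ?_⟩
  · intro j hj0
    have h2 := congrFun hj0 2
    rw [hz2 j] at h2
    norm_num at h2
  · intro j k hjk c heq
    have h2 := congrFun heq 2
    rw [hz2 j, Pi.smul_apply, hz2 k, smul_eq_mul, mul_one] at h2
    have h0 := congrFun heq 0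
    rw [hz0 j, Pi.smul_apply, hz0 k, smul_eq_mul, ← h2, one_mul] at h0
    have h1 := congrFun heq 1
    rw [hz1 j, Pi.smul_apply, hz1 k, smul_eq_mul, ← h2, one_mul] at h1
    have hn0 : (e.symm j).1.val = (e.symm k).1.val := by
      have : ((e.symm j).1.val + 1 : ℕ) = ((e.symm k).1.val + 1 : ℕ) := by exact_mod_cast h0
      omega
    have hn1 : (e.symm j).2.val = (e.symm k).2.val := by
      have : ((e.symm j).2.val + 1 : ℕ) = ((e.symm k).2.val + 1 : ℕ) := by exact_mod_cast h1
      omega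
    apply hjk
    apply e.symm.injective
    have hfst : (e.symm j).1 = (e.symm k).1 := Fin.ext hn0
    exact Sigma.ext hfst ((Fin.heq_ext_iff (by rw [hfst])).mpr hn1)
  · intro m p q hp hq hpq hvan
    have hqvan : ∀ t, eval (z t) (∑ i, q i ^ 2) = 0 := fun t => by
      rw [← hpq]; exact hvan t
    have hbridge : ∀ g : MvPolynomial (Fin 3) ℝ,
        (∀ t, eval (z t) g = 0) →
        ∀ k i : ℕ, 1 ≤ i → i ≤ k → k ≤ d →
          SOSU.ev2 (k:ℝ) (i:ℝ) (SOSU.Phi g) = 0 := by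
      intro g hg k i h1 h2 h3
      rw [SOSU.ev2_Phi]
      have hk : k - 1 < d := by omega
      have hi : i - 1 < (⟨k-1, hk⟩ : Fin d).val + 1 := by
        simp only []
        omega
      set s : Σ k0 : Fin d, Fin (k0.val + 1) := ⟨⟨k-1, hk⟩, ⟨i-1, hi⟩⟩ with hs
      have hzs : z (e s) = ![(k:ℝ), (i:ℝ), 1] := by
        funext idx
        fin_cases idx
        · show z (e s) 0 = (k : ℝ)
          rw [hz0, Equiv.symm_apply_apply]
          show (((k - 1) + 1 : ℕ) : ℝ) = (k : ℝ)
          congr 1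
          omega
        · show z (e s) 1 = (i : ℝ)
          rw [hz1, Equiv.symm_apply_apply]
          show (((i - 1) + 1 : ℕ) : ℝ) = (i : ℝ)
          congr 1
          omega
        · show z (e s) 2 = 1
          exact hz2 _
      rw [← hzs]
      exact hg (e s)
    have hPex : ∀ i : Fin m, ∃ c : ℕ → ℝ,
        SOSU.Phi (p i) = ∑ j ∈ Finset.range (d+1), c j • SOSU.bet j d :=
      fun i => SOSU.span2 d _ (SOSU.Phi_TD (hp i))
        (hbridge _ (fun t => SOSU.vanish_of_sq_sum p (z t) (hvan t) i))
    have hQex : ∀ i : Fin m, ∃ c : ℕ → ℝ,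
        SOSU.Phi (q i) = ∑ j ∈ Finset.range (d+1), c j • SOSU.bet j d :=
      fun i => SOSU.span2 d _ (SOSU.Phi_TD (hq i))
        (hbridge _ (fun t => SOSU.vanish_of_sq_sum q (z t) (hqvan t) i))
    choose cp hcp using hPex
    choose cq hcq using hQex
    have hPhiEq : (∑ i : Fin m, (SOSU.Phi (p i))^2) = ∑ i : Fin m, (SOSU.Phi (q i))^2 := by
      have h := congrArg SOSU.Phi hpq
      rw [map_sum, map_sum] at h
      rw [Finset.sum_congr rfl (fun i _ => (map_pow SOSU.Phi (p i) 2)),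
        Finset.sum_congr rfl (fun i _ => (map_pow SOSU.Phi (q i) 2))] at h
      exact h
    have hexpand : ∀ (cc : Fin m → ℕ → ℝ),
        (∑ i : Fin m, (∑ j ∈ Finset.range (d+1), cc i j • SOSU.bet j d)^2)
          = ∑ j ∈ Finset.range (d+1), ∑ k ∈ Finset.range (d+1),
              (∑ i : Fin m, cc i j * cc i k) • (SOSU.bet j d * SOSU.bet k d) := by
      intro cc
      rw [Finset.sum_congr rfl (fun i _ => SOSU.sq_expand d (d+1) (cc i))]
      rw [Finset.sum_comm]
      apply Finset.sum_congr rfl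
      intro j _
      rw [Finset.sum_comm]
      apply Finset.sum_congr rfl
      intro k _
      rw [Finset.sum_smul]
    set G : ℕ → ℕ → ℝ :=
      fun j k => ∑ i : Fin m, (cp i j * cp i k - cq i j * cq i k) with hG
    have hGsym : ∀ j k, G j k = G k j := by
      intro j k
      simp only [hG]
      exact Finset.sum_congr rfl (fun i _ => by ring)
    have hbig : (∑ j ∈ Finset.range (d+1), ∑ k ∈ Finset.range (d+1),
        G j k • (SOSU.bet j d * SOSU.bet k d)) = 0 := by
      have hsplit : ∀ j k : ℕ, G j k • (SOSU.bet j d * SOSU.bet k d)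
          = (∑ i : Fin m, cp i j * cp i k) • (SOSU.bet j d * SOSU.bet k d)
            - (∑ i : Fin m, cq i j * cq i k) • (SOSU.bet j d * SOSU.bet k d) := by
        intro j k
        simp only [hG]
        rw [Finset.sum_sub_distrib, sub_smul]
      rw [Finset.sum_congr rfl (fun j _ => Finset.sum_congr rfl (fun k _ => hsplit j k))]
      rw [Finset.sum_congr rfl (fun j _ => Finset.sum_sub_distrib _ _), Finset.sum_sub_distrib]
      rw [← hexpand cp, ← hexpand cq]
      rw [Finset.sum_congr rfl (fun i _ => congrArg (· ^ 2) (hcp i).symm),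
        Finset.sum_congr rfl (fun i _ => congrArg (· ^ 2) (hcq i).symm)]
      rw [hPhiEq, sub_self]
    have hGzero := SOSU.indep2 d G hGsym hbig
    set MP : Matrix (Fin m) (Fin (d+1)) ℝ := Matrix.of (fun i j => cp i j.val) with hMP
    set MQ : Matrix (Fin m) (Fin (d+1)) ℝ := Matrix.of (fun i j => cq i j.val) with hMQ
    have hgram : MP.transpose * MP = MQ.transpose * MQ := by
      ext j k
      simp only [Matrix.mul_apply, Matrix.transpose_apply, hMP, hMQ, Matrix.of_apply]
      have h0 := hGzero j.val k.val (by omega) (by omega)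
      simp only [hG] at h0
      rw [Finset.sum_sub_distrib] at h0
      exact sub_eq_zero.mp h0
    obtain ⟨u, huu, huu2, hQP⟩ := SOSU.orth_of_gram MP MQ hgram
    refine ⟨u.transpose, ?_, ?_⟩
    · rw [Matrix.transpose_transpose]
      exact huu
    · intro k0
      have hhR : (∑ i : Fin m, u k0 i • p i).IsHomogeneous d := by
        rw [← MvPolynomial.mem_homogeneousSubmodule]
        apply Submodule.sum_mem
        intro i _
        exact Submodule.smul_mem _ _ ((MvPolynomial.mem_homogeneousSubmodule _ _).mpr (hp i))
      have hcoef : ∀ j ∈ Finset.range (d+1),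
          cq k0 j = (∑ i : Fin m, u k0 i * cp i j) := by
        intro j hj
        have hjlt : j < d+1 := Finset.mem_range.mp hj
        have h1 := congrFun (congrFun hQP k0) ⟨j, hjlt⟩
        simp only [Matrix.mul_apply, hMP, hMQ, Matrix.of_apply] at h1
        exact h1
      have hPhiR : SOSU.Phi (q k0) = SOSU.Phi (∑ i : Fin m, u k0 i • p i) := by
        rw [map_sum]
        rw [Finset.sum_congr rfl (fun i _ => map_smul SOSU.Phi (u k0 i) (p i))]
        rw [Finset.sum_congr rfl (fun i _ => congrArg (u k0 i • ·) (hcp i))]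
        rw [Finset.sum_congr rfl (fun i _ => Finset.smul_sum)]
        rw [Finset.sum_comm]
        rw [hcq k0]
        apply Finset.sum_congr rfl
        intro j hj
        rw [hcoef j hj, Finset.sum_smul]
        exact Finset.sum_congr rfl (fun i _ => (smul_smul _ _ _).symm)
      have hdiff : q k0 - (∑ i : Fin m, u k0 i • p i) = 0 := by
        apply SOSU.Phi_inj ((hq k0).sub hhR)
        rw [map_sub, hPhiR, sub_self]
      have hfin := sub_eq_zero.mp hdiff
      rw [hfin]
      apply Finset.sum_congr rfl
      intro i _
      rw [Matrix.transpose_apply]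


end
end

section
/- For every d ≥ 2 there exists a form f of degree 2d in ℝ[x_1,x_2,x_3] that is a sum of squares of forms of degree d but is not a sum of d squares of forms of degree d; i.e., ℓ(f) ≥ d+1. Consequently p(3,2d) ≥ d + 1. -/
open MvPolynomial

noncomputable section

section Aux

abbrev R2 := MvPolynomial (Fin 2) ℝ
abbrev R3 := MvPolynomial (Fin 3) ℝ

def nxP (a : ℕ) : R2 := ∏ i ∈ Finset.range a, (X 0 - C (i:ℝ))
def nyP (b : ℕ) : R2 := ∏ j ∈ Finset.range b, (X 1 - C (j:ℝ))
def NBP (a b : ℕ) : R2 := nxP a * nyP b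
def qP (d k : ℕ) : R2 := NBP k (d - k)
def pxv (a : ℕ) (t : ℝ) : ℝ := ∏ i ∈ Finset.range a, (t - (i:ℝ))
def nU (a : ℕ) : Polynomial ℝ := ∏ i ∈ Finset.range a, (Polynomial.X - Polynomial.C (i:ℝ))
def TdF (d : ℕ) : Finset (ℕ × ℕ) :=
  (Finset.range (d+1) ×ˢ Finset.range (d+1)).filter (fun p => p.1 + p.2 ≤ d)

lemma eval_nxP (x y : ℝ) (a : ℕ) : eval ![x, y] (nxP a) = pxv a x := by
  simp [nxP, pxv]

lemma eval_nyP (x y : ℝ) (b : ℕ) : eval ![x, y] (nyP b) = pxv b y := by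
  simp [nyP, pxv]

lemma eval_NBP (x y : ℝ) (a b : ℕ) :
    eval ![x, y] (NBP a b) = pxv a x * pxv b y := by
  simp [NBP, eval_nxP, eval_nyP]

lemma pxv_nat_zero {n a : ℕ} (h : n < a) : pxv a (n : ℝ) = 0 := by
  apply Finset.prod_eq_zero (Finset.mem_range.mpr h)
  simp

lemma pxv_nat_pos {n a : ℕ} (h : a ≤ n) : 0 < pxv a (n : ℝ) := by
  apply Finset.prod_pos
  intro i hi
  have : i < n := lt_of_lt_of_le (Finset.mem_range.mp hi) h
  have : (i : ℝ) < n := by exact_mod_cast this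
  linarith


lemma nU_monic (a : ℕ) : (nU a).Monic :=
  Polynomial.monic_prod_of_monic _ _ (fun i _ => Polynomial.monic_X_sub_C _)

lemma nU_natDegree (a : ℕ) : (nU a).natDegree = a := by
  rw [nU, Polynomial.natDegree_prod]
  · simp only [Polynomial.natDegree_X_sub_C, Finset.sum_const, smul_eq_mul,
      mul_one, Finset.card_range]
  · intro i _
    exact (Polynomial.monic_X_sub_C _).ne_zero

lemma upoly : ∀ (α : ℕ) (p : Polynomial ℝ), p.natDegree ≤ α →
    p ∈ Submodule.span ℝ (nU '' Set.Iic α) := by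
  intro α
  induction α using Nat.strong_induction_on with
  | _ α IH =>
    intro p hp
    match α with
    | 0 =>
      rw [Polynomial.eq_C_of_natDegree_le_zero hp]
      have h1 : Polynomial.C (p.coeff 0) = (p.coeff 0) • nU 0 := by
        simp [nU, Polynomial.smul_eq_C_mul]
      rw [h1]
      exact Submodule.smul_mem _ _ (Submodule.subset_span ⟨0, Set.mem_Iic.mpr (le_refl 0), rfl⟩)
    | β + 1 =>
      set c := p.coeff (β+1) with hc
      set q := p - Polynomial.C c * nU (β+1) with hq
      have hnd : (Polynomial.C c * nU (β+1)).natDegree ≤ β + 1 := by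
        refine le_trans (Polynomial.natDegree_C_mul_le _ _) ?_
        rw [nU_natDegree]
      have hqd : q.natDegree ≤ β := by
        rw [Polynomial.natDegree_le_iff_coeff_eq_zero]
        intro N hN
        rcases eq_or_lt_of_le (Nat.succ_le_of_lt hN) with h | h
        · -- N = β + 1
          rw [hq, Polynomial.coeff_sub, Polynomial.coeff_C_mul, ← h]
          have : (nU (β+1)).coeff (β+1) = 1 := by
            have := (nU_monic (β+1)).coeff_natDegree
            rwa [nU_natDegree] at this
          rw [this, ← hc]; ring
        · rw [hq, Polynomial.coeff_sub,
            Polynomial.coeff_eq_zero_of_natDegree_lt (lt_of_le_of_lt hp h),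
            Polynomial.coeff_eq_zero_of_natDegree_lt (lt_of_le_of_lt hnd h)]
          ring
      have h1 : q ∈ Submodule.span ℝ (nU '' Set.Iic β) := IH β (Nat.lt_succ_self β) q hqd
      have h2 : p = q + c • nU (β+1) := by
        rw [hq, Polynomial.smul_eq_C_mul]; ring
      rw [h2]
      refine Submodule.add_mem _ ?_ ?_
      · exact Submodule.span_mono (Set.image_mono (Set.Iic_subset_Iic.mpr (Nat.le_succ β))) h1
      · exact Submodule.smul_mem _ _
          (Submodule.subset_span ⟨β+1, Set.mem_Iic.mpr (le_refl _), rfl⟩)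


lemma mem_TdF {d a b : ℕ} : (a, b) ∈ TdF d ↔ a ≤ d ∧ b ≤ d ∧ a + b ≤ d := by
  simp [TdF, Nat.lt_succ_iff, and_assoc]

lemma aeval_nU_x (a : ℕ) : Polynomial.aeval (X 0 : R2) (nU a) = nxP a := by
  rw [nU, map_prod, nxP]
  refine Finset.prod_congr rfl (fun i _ => ?_)
  simp [algebraMap_eq]

lemma aeval_nU_y (a : ℕ) : Polynomial.aeval (X 1 : R2) (nU a) = nyP a := by
  rw [nU, map_prod, nyP]
  refine Finset.prod_congr rfl (fun i _ => ?_)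
  simp [algebraMap_eq]

lemma xpow_mem (α : ℕ) : (X 0 : R2)^α ∈ Submodule.span ℝ (nxP '' Set.Iic α) := by
  have h := upoly α (Polynomial.X ^ α) (by simp)
  have h2 := Submodule.apply_mem_span_image_of_mem_span
    (Polynomial.aeval (X 0 : R2)).toLinearMap h
  rw [← Set.image_comp] at h2
  have h3 : ((Polynomial.aeval (X 0 : R2)).toLinearMap ∘ nU) = nxP := by
    funext a; exact aeval_nU_x a
  rw [h3] at h2
  simpa using h2

lemma ypow_mem (β : ℕ) : (X 1 : R2)^β ∈ Submodule.span ℝ (nyP '' Set.Iic β) := by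
  have h := upoly β (Polynomial.X ^ β) (by simp)
  have h2 := Submodule.apply_mem_span_image_of_mem_span
    (Polynomial.aeval (X 1 : R2)).toLinearMap h
  rw [← Set.image_comp] at h2
  have h3 : ((Polynomial.aeval (X 1 : R2)).toLinearMap ∘ nU) = nyP := by
    funext a; exact aeval_nU_y a
  rw [h3] at h2
  simpa using h2

lemma mono_mem {d α β : ℕ} (hαβ : α + β ≤ d) :
    (X 0 : R2)^α * (X 1)^β ∈
      Submodule.span ℝ ((fun p : ℕ × ℕ => NBP p.1 p.2) '' ↑(TdF d)) := by
  have hx := xpow_mem α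
  have hy := ypow_mem β
  have hmul := Submodule.mul_mem_mul hx hy
  rw [Submodule.span_mul_span] at hmul
  refine Submodule.span_le.mpr ?_ hmul
  rintro z ⟨s, hs, t, ht, rfl⟩
  obtain ⟨a, ha, rfl⟩ := hs
  obtain ⟨b, hb, rfl⟩ := ht
  apply Submodule.subset_span
  refine ⟨(a, b), ?_, rfl⟩
  rw [Finset.mem_coe, mem_TdF]
  have ha' : a ≤ α := ha
  have hb' : b ≤ β := hb
  omega

lemma span_total {d : ℕ} (u : R2) (hu : u.totalDegree ≤ d) :
    u ∈ Submodule.span ℝ ((fun p : ℕ × ℕ => NBP p.1 p.2) '' ↑(TdF d)) := by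
  rw [← support_sum_monomial_coeff u]
  refine Submodule.sum_mem _ (fun m hm => ?_)
  have hmd : m 0 + m 1 ≤ d := by
    have h1 := le_totalDegree hm
    have h2 : (m.sum fun _ e => e) = m 0 + m 1 := by
      rw [Finsupp.sum_fintype _ _ (fun i => rfl), Fin.sum_univ_two]
    omega
  have hmono : (monomial m) (coeff m u) = (coeff m u) • ((X 0 : R2)^(m 0) * (X 1)^(m 1)) := by
    rw [monomial_eq, Finsupp.prod_fintype _ _ (fun i => pow_zero _), Fin.prod_univ_two,
      smul_eq_C_mul]
  rw [hmono]
  exact Submodule.smul_mem _ _ (mono_mem hmd)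


-- value of qP at an integer point
lemma eval_qP (d k : ℕ) (x y : ℝ) : eval ![x, y] (qP d k) = pxv k x * pxv (d - k) y := by
  rw [qP, eval_NBP]



lemma span_repr {d : ℕ} (u : R2) (hu : u.totalDegree ≤ d)
    (hv : ∀ a b : ℕ, a + b < d → eval ![(a:ℝ), (b:ℝ)] u = 0) :
    ∃ cc : ℕ → ℝ, u = ∑ k ∈ Finset.range (d+1), cc k • qP d k := by
  have h := span_total u hu
  rw [Set.image_eq_range] at h
  obtain ⟨c, hc⟩ := (Submodule.mem_span_range_iff_exists_fun ℝ).mp h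
  -- eliminate coefficients below the top diagonal
  have hz : ∀ s : ℕ, ∀ i : ↥(↑(TdF d) : Set (ℕ × ℕ)),
      (i : ℕ × ℕ).1 + (i : ℕ × ℕ).2 < d → (i : ℕ × ℕ).1 + (i : ℕ × ℕ).2 ≤ s → c i = 0 := by
    intro s
    induction s using Nat.strong_induction_on with
    | _ s IH =>
      intro i hlt hs
      have h0 : eval ![(((i : ℕ × ℕ).1 : ℕ) : ℝ), (((i : ℕ × ℕ).2 : ℕ) : ℝ)] u = 0 :=
        hv _ _ hlt
      rw [← hc, map_sum] at h0
      have hterm : ∀ j ∈ Finset.univ, j ≠ i →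
          eval ![(((i : ℕ × ℕ).1 : ℕ) : ℝ), (((i : ℕ × ℕ).2 : ℕ) : ℝ)]
            (c j • NBP (j : ℕ × ℕ).1 (j : ℕ × ℕ).2) = 0 := by
        intro j _ hj
        rw [smul_eq_C_mul, map_mul, eval_C, eval_NBP]
        by_cases h1 : (j : ℕ × ℕ).1 ≤ (i : ℕ × ℕ).1 ∧ (j : ℕ × ℕ).2 ≤ (i : ℕ × ℕ).2
        · have hne : ¬((j : ℕ × ℕ).1 = (i : ℕ × ℕ).1 ∧ (j : ℕ × ℕ).2 = (i : ℕ × ℕ).2) := by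
            rintro ⟨e1, e2⟩
            exact hj (Subtype.ext (Prod.ext e1 e2))
          have hsum_lt : (j : ℕ × ℕ).1 + (j : ℕ × ℕ).2 < (i : ℕ × ℕ).1 + (i : ℕ × ℕ).2 := by
            omega
          have hcj : c j = 0 :=
            IH ((j : ℕ × ℕ).1 + (j : ℕ × ℕ).2) (lt_of_lt_of_le hsum_lt hs) j
              (lt_trans hsum_lt hlt) le_rfl
          rw [hcj]; ring
        · rcases not_and_or.mp h1 with h2 | h2
          · push_neg at h2
            rw [pxv_nat_zero h2]; ring
          · push_neg at h2
            rw [pxv_nat_zero h2]; ring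
      rw [Finset.sum_eq_single_of_mem i (Finset.mem_univ i) hterm] at h0
      rw [smul_eq_C_mul, map_mul, eval_C, eval_NBP] at h0
      have hpos : 0 < pxv (i : ℕ × ℕ).1 (((i : ℕ × ℕ).1 : ℕ) : ℝ) *
          pxv (i : ℕ × ℕ).2 (((i : ℕ × ℕ).2 : ℕ) : ℝ) :=
        mul_pos (pxv_nat_pos le_rfl) (pxv_nat_pos le_rfl)
      rcases mul_eq_zero.mp h0 with h' | h'
      · exact h'
      · exact absurd h' (ne_of_gt hpos)
  -- reindex the top-diagonal sum
  refine ⟨fun k => if h : (k, d - k) ∈ TdF d then c ⟨(k, d - k), h⟩ else 0, ?_⟩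
  rw [← hc]
  have hsub : ∑ i : ↥(↑(TdF d) : Set (ℕ × ℕ)), c i • NBP (i : ℕ × ℕ).1 (i : ℕ × ℕ).2
      = ∑ i ∈ Finset.univ.filter
          (fun i : ↥(↑(TdF d) : Set (ℕ × ℕ)) => (i : ℕ × ℕ).1 + (i : ℕ × ℕ).2 = d),
          c i • NBP (i : ℕ × ℕ).1 (i : ℕ × ℕ).2 := by
    refine (Finset.sum_subset (Finset.filter_subset _ _) ?_).symm
    intro i _ hnot
    have hiT : (i : ℕ × ℕ) ∈ TdF d := Finset.mem_coe.mp i.2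
    have hle : (i : ℕ × ℕ).1 + (i : ℕ × ℕ).2 ≤ d := by
      have := mem_TdF.mp (by rwa [← Prod.mk.eta (p := (i : ℕ × ℕ))] at hiT)
      exact this.2.2
    have hne : (i : ℕ × ℕ).1 + (i : ℕ × ℕ).2 ≠ d := by
      intro he; exact hnot (Finset.mem_filter.mpr ⟨Finset.mem_univ _, he⟩)
    rw [hz ((i : ℕ × ℕ).1 + (i : ℕ × ℕ).2) i (by omega) le_rfl, zero_smul]
  rw [hsub]
  refine Finset.sum_bij' (i := fun a _ => (a : ℕ × ℕ).1)
    (j := fun k hk => ⟨(k, d - k), Finset.mem_coe.mpr (mem_TdF.mpr (by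
      have : k ≤ d := Nat.lt_succ_iff.mp (Finset.mem_range.mp hk); omega))⟩)
    ?_ ?_ ?_ ?_ ?_
  · intro a ha
    have hiT : (a : ℕ × ℕ) ∈ TdF d := Finset.mem_coe.mp a.2
    have := mem_TdF.mp (by rwa [← Prod.mk.eta (p := (a : ℕ × ℕ))] at hiT)
    exact Finset.mem_range.mpr (Nat.lt_succ_iff.mpr this.1)
  · intro k hk
    refine Finset.mem_filter.mpr ⟨Finset.mem_univ _, ?_⟩
    have : k ≤ d := Nat.lt_succ_iff.mp (Finset.mem_range.mp hk)
    simp; omega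
  · intro a ha
    have hda : (a : ℕ × ℕ).1 + (a : ℕ × ℕ).2 = d := (Finset.mem_filter.mp ha).2
    apply Subtype.ext
    apply Prod.ext
    · rfl
    · simp; omega
  · intro k hk
    rfl
  · intro a ha
    have hda : (a : ℕ × ℕ).1 + (a : ℕ × ℕ).2 = d := (Finset.mem_filter.mp ha).2
    have h2 : (a : ℕ × ℕ).2 = d - (a : ℕ × ℕ).1 := by omega
    have hmem : ((a : ℕ × ℕ).1, d - (a : ℕ × ℕ).1) ∈ TdF d := by
      rw [mem_TdF]; omega
    beta_reduce
    rw [dif_pos hmem]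
    have he : (⟨((a : ℕ × ℕ).1, d - (a : ℕ × ℕ).1), Finset.mem_coe.mpr hmem⟩ :
        ↥(↑(TdF d) : Set (ℕ × ℕ))) = a := by
      apply Subtype.ext
      apply Prod.ext
      · rfl
      · simp; omega
    rw [he, qP, ← h2]


lemma prodIndep {d : ℕ} (M : ℕ → ℕ → ℝ) (hsym : ∀ k l, M k l = M l k)
    (h : ∑ k ∈ Finset.range (d+1), ∑ l ∈ Finset.range (d+1),
      M k l • (qP d k * qP d l) = 0) :
    ∀ k l, k ≤ d → l ≤ d → M k l = 0 := by
  -- E-values at the point (l, d-k)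
  have key : ∀ m : ℕ, ∀ k l, k ≤ l → l ≤ d → l - k < m → M k l = 0 := by
    intro m
    induction m with
    | zero => intro k l _ _ h0; omega
    | succ m IH =>
      intro k l hkl hld hlt
      by_cases hcase : l - k < m
      · exact IH k l hkl hld hcase
      have hm : l - k = m := by omega
      -- evaluate at ((l:ℝ), ((d-k:ℕ):ℝ))
      set E : ℕ → ℝ := fun t => pxv t ((l : ℕ) : ℝ) * pxv (d - t) ((d - k : ℕ) : ℝ) with hE
      have hEval : ∀ a b : ℕ,
          eval ![((l : ℕ) : ℝ), ((d - k : ℕ) : ℝ)] (M a b • (qP d a * qP d b))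
            = M a b * (E a * E b) := by
        intro a b
        rw [smul_eq_C_mul, map_mul, map_mul, eval_C, eval_qP, eval_qP]
        try simp only [hE]
        try ring
      have h0 : ∑ k' ∈ Finset.range (d+1), ∑ l' ∈ Finset.range (d+1),
          M k' l' * (E k' * E l') = 0 := by
        have h1 := congrArg (eval ![((l : ℕ) : ℝ), ((d - k : ℕ) : ℝ)]) h
        rw [map_zero] at h1
        rw [map_sum] at h1
        simp only [map_sum, hEval] at h1
        exact h1
      have hEzero : ∀ t, t ≤ d → (t < k ∨ l < t) → E t = 0 := by
        intro t htd hcs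
        simp only [hE]
        rcases hcs with h1 | h1
        · have h2 : (d - k) < (d - t) := by omega
          rw [pxv_nat_zero h2, mul_zero]
        · rw [pxv_nat_zero h1, zero_mul]
      have hEpos : ∀ t, k ≤ t → t ≤ l → 0 < E t := by
        intro t h1 h2
        simp only [hE]
        exact mul_pos (pxv_nat_pos h2) (pxv_nat_pos (by omega))
      -- rewrite double sum as sum over product
      rw [← Finset.sum_product'] at h0
      -- restrict to the pair {(k,l), (l,k)}
      have hsub : ∑ p ∈ (Finset.range (d+1)) ×ˢ (Finset.range (d+1)),
          M p.1 p.2 * (E p.1 * E p.2)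
          = ∑ p ∈ ({(k, l), (l, k)} : Finset (ℕ × ℕ)), M p.1 p.2 * (E p.1 * E p.2) := by
        refine (Finset.sum_subset ?_ ?_).symm
        · intro p hp
          rcases Finset.mem_insert.mp hp with h1 | h1
          · subst h1
            exact Finset.mem_product.mpr ⟨Finset.mem_range.mpr (by omega),
              Finset.mem_range.mpr (by omega)⟩
          · rw [Finset.mem_singleton.mp h1]
            exact Finset.mem_product.mpr ⟨Finset.mem_range.mpr (by omega),
              Finset.mem_range.mpr (by omega)⟩
        · intro p hp hnp
          obtain ⟨hp1, hp2⟩ := Finset.mem_product.mp hp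
          have hp1' : p.1 ≤ d := Nat.lt_succ_iff.mp (Finset.mem_range.mp hp1)
          have hp2' : p.2 ≤ d := Nat.lt_succ_iff.mp (Finset.mem_range.mp hp2)
          by_cases hz1 : p.1 < k ∨ l < p.1
          · rw [hEzero p.1 hp1' hz1]; ring
          by_cases hz2 : p.2 < k ∨ l < p.2
          · rw [hEzero p.2 hp2' hz2]; ring
          push_neg at hz1 hz2
          -- both coordinates in [k, l], but p ≠ (k,l),(l,k)
          have hne1 : p ≠ (k, l) := fun he => hnp (by rw [he]; exact Finset.mem_insert_self _ _)
          have hne2 : p ≠ (l, k) := fun he => hnp (by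
            rw [he]; exact Finset.mem_insert.mpr (Or.inr (Finset.mem_singleton_self _)))
          have hd1 : ¬(p.1 = k ∧ p.2 = l) := fun ⟨e1, e2⟩ => hne1 (Prod.ext e1 e2)
          have hd2 : ¬(p.1 = l ∧ p.2 = k) := fun ⟨e1, e2⟩ => hne2 (Prod.ext e1 e2)
          -- |p.1 - p.2| < m
          have : M p.1 p.2 = 0 := by
            rcases le_total p.1 p.2 with hle | hle
            · exact IH p.1 p.2 hle hp2' (by omega)
            · rw [hsym]; exact IH p.2 p.1 hle hp1' (by omega)
          rw [this]; ring
      rw [hsub] at h0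
      by_cases hkl' : k = l
      · subst hkl'
        rw [Finset.insert_eq_self.mpr (Finset.mem_singleton_self _)] at h0
        rw [Finset.sum_singleton] at h0
        have hp := hEpos k le_rfl le_rfl
        have := mul_eq_zero.mp h0
        rcases this with h' | h'
        · exact h'
        · exact absurd h' (ne_of_gt (mul_pos hp hp))
      · have hpair : ((k, l) : ℕ × ℕ) ≠ (l, k) := by
          intro he
          exact hkl' (congrArg Prod.fst he)
        rw [Finset.sum_pair hpair] at h0
        have hp1 := hEpos k le_rfl hkl
        have hp2 := hEpos l hkl le_rfl
        have : M k l * (E k * E l) + M l k * (E l * E k) = 2 * M k l * (E k * E l) := by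
          rw [hsym l k]; ring
        rw [this] at h0
        have h2 : (2 : ℝ) * M k l = 0 := by
          rcases mul_eq_zero.mp h0 with h' | h'
          · exact h'
          · exact absurd h' (ne_of_gt (mul_pos hp1 hp2))
        linarith
  intro k l hk hl
  rcases le_total k l with h1 | h1
  · exact key (l - k + 1) k l h1 hl (by omega)
  · rw [hsym]; exact key (k - l + 1) l k h1 hk (by omega)


lemma keyLB {d r : ℕ} (u : Fin r → R2)
    (hdeg : ∀ j, (u j).totalDegree ≤ d)
    (hsum : ∑ j, (u j)^2 = ∑ k ∈ Finset.range (d+1), (qP d k)^2) :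
    d + 1 ≤ r := by
  -- each u j vanishes on the triangle
  have hvan : ∀ j, ∀ a b : ℕ, a + b < d → eval ![(a:ℝ), (b:ℝ)] (u j) = 0 := by
    intro j a b hab
    have hRHS : eval ![(a:ℝ), (b:ℝ)] (∑ k ∈ Finset.range (d+1), (qP d k)^2) = 0 := by
      rw [map_sum]
      refine Finset.sum_eq_zero (fun k _ => ?_)
      rw [map_pow, eval_qP]
      by_cases hk : k ≤ a
      · have : b < d - k := by omega
        rw [pxv_nat_zero this, mul_zero]; ring
      · push_neg at hk
        rw [pxv_nat_zero hk, zero_mul]; ring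
    have hL : ∑ j : Fin r, (eval ![(a:ℝ), (b:ℝ)] (u j))^2 = 0 := by
      have := congrArg (eval ![(a:ℝ), (b:ℝ)]) hsum
      rw [map_sum] at this
      simp only [map_pow] at this
      rw [this, hRHS]
    have := (Finset.sum_eq_zero_iff_of_nonneg
      (fun j _ => sq_nonneg (eval ![(a:ℝ), (b:ℝ)] (u j)))).mp hL j (Finset.mem_univ j)
    exact (pow_eq_zero_iff two_ne_zero).mp this
  -- coefficients
  choose cf hcf using fun j => span_repr (u j) (hdeg j) (hvan j)
  set G : ℕ → ℕ → ℝ := fun k l => ∑ j : Fin r, cf j k * cf j l with hG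
  -- expand the sum of squares
  have hexp : ∑ j : Fin r, (u j)^2 = ∑ k ∈ Finset.range (d+1), ∑ l ∈ Finset.range (d+1),
      G k l • (qP d k * qP d l) := by
    have h1 : ∀ j, (u j)^2 = ∑ k ∈ Finset.range (d+1), ∑ l ∈ Finset.range (d+1),
        (cf j k * cf j l) • (qP d k * qP d l) := by
      intro j
      rw [sq, hcf j, Finset.sum_mul_sum]
      refine Finset.sum_congr rfl (fun k _ => Finset.sum_congr rfl (fun l _ => ?_))
      rw [smul_mul_smul_comm]
    calc ∑ j : Fin r, (u j)^2
        = ∑ j : Fin r, ∑ k ∈ Finset.range (d+1), ∑ l ∈ Finset.range (d+1),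
            (cf j k * cf j l) • (qP d k * qP d l) := Finset.sum_congr rfl (fun j _ => h1 j)
      _ = ∑ k ∈ Finset.range (d+1), ∑ j : Fin r, ∑ l ∈ Finset.range (d+1),
            (cf j k * cf j l) • (qP d k * qP d l) := Finset.sum_comm
      _ = ∑ k ∈ Finset.range (d+1), ∑ l ∈ Finset.range (d+1), ∑ j : Fin r,
            (cf j k * cf j l) • (qP d k * qP d l) :=
              Finset.sum_congr rfl (fun k _ => Finset.sum_comm)
      _ = ∑ k ∈ Finset.range (d+1), ∑ l ∈ Finset.range (d+1),
            G k l • (qP d k * qP d l) := by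
              refine Finset.sum_congr rfl (fun k _ => Finset.sum_congr rfl (fun l _ => ?_))
              rw [hG]
              rw [← Finset.sum_smul]
  -- diagonal expansion of the rhs
  have hdiag : ∑ k ∈ Finset.range (d+1), (qP d k)^2
      = ∑ k ∈ Finset.range (d+1), ∑ l ∈ Finset.range (d+1),
          (if k = l then (1:ℝ) else 0) • (qP d k * qP d l) := by
    refine Finset.sum_congr rfl (fun k hk => ?_)
    have : ∀ l, (if k = l then (1:ℝ) else 0) • (qP d k * qP d l)
        = if k = l then qP d k * qP d l else 0 := by
      intro l; split <;> simp
    simp only [this]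
    rw [Finset.sum_ite_eq]
    rw [if_pos hk, ← sq]
  -- the Gram matrix is the identity
  have hM : ∀ k l, k ≤ d → l ≤ d → G k l - (if k = l then (1:ℝ) else 0) = 0 := by
    apply prodIndep
    · intro k l
      have e1 : G k l = G l k := by
        rw [hG]
        exact Finset.sum_congr rfl (fun j _ => mul_comm _ _)
      have e2 : (if k = l then (1:ℝ) else 0) = (if l = k then (1:ℝ) else 0) := by
        simp [eq_comm]
      rw [e1, e2]
    · have hEq : ∑ k ∈ Finset.range (d+1), ∑ l ∈ Finset.range (d+1),
          G k l • (qP d k * qP d l)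
          = ∑ k ∈ Finset.range (d+1), ∑ l ∈ Finset.range (d+1),
          (if k = l then (1:ℝ) else 0) • (qP d k * qP d l) := by
        rw [← hexp, ← hdiag, hsum]
      have : ∑ k ∈ Finset.range (d+1), ∑ l ∈ Finset.range (d+1),
          (G k l - (if k = l then (1:ℝ) else 0)) • (qP d k * qP d l)
          = ∑ k ∈ Finset.range (d+1), (∑ l ∈ Finset.range (d+1),
            G k l • (qP d k * qP d l) - ∑ l ∈ Finset.range (d+1),
            (if k = l then (1:ℝ) else 0) • (qP d k * qP d l)) := by
        refine Finset.sum_congr rfl (fun k _ => ?_)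
        rw [← Finset.sum_sub_distrib]
        refine Finset.sum_congr rfl (fun l _ => ?_)
        rw [sub_smul]
      rw [this, Finset.sum_sub_distrib]
      exact sub_eq_zero.mpr hEq
  have horth : ∀ k l, k ≤ d → l ≤ d → G k l = if k = l then (1:ℝ) else 0 := by
    intro k l hk hl
    have := hM k l hk hl
    linarith [this]
  -- orthonormal family in EuclideanSpace
  set w : Fin (d+1) → EuclideanSpace ℝ (Fin r) :=
    fun k => (WithLp.equiv 2 (Fin r → ℝ)).symm (fun j => cf j (k : ℕ)) with hw
  have hON : Orthonormal ℝ w := by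
    rw [orthonormal_iff_ite]
    intro i j
    have hinner : (inner ℝ (w i) (w j) : ℝ) = G (i : ℕ) (j : ℕ) := by
      rw [hw]
      simp only [PiLp.inner_apply, RCLike.inner_apply, WithLp.equiv_symm_apply, PiLp.toLp_apply]
      rw [hG]
      refine Finset.sum_congr rfl (fun t _ => ?_)
      simp [conj_trivial, mul_comm]
    rw [hinner, horth _ _ (Fin.is_le i) (Fin.is_le j)]
    simp [Fin.val_inj]
  have hcard := hON.linearIndependent.fintype_card_le_finrank
  rwa [Fintype.card_fin, finrank_euclideanSpace_fin] at hcard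


end Aux

-- the ternary forms
def QF (d k : ℕ) : R3 :=
  (∏ i ∈ Finset.range k, (X 0 - C (i:ℝ) * X 2)) *
  (∏ j ∈ Finset.range (d - k), (X 1 - C (j:ℝ) * X 2))

lemma QF_homog {d k : ℕ} (hk : k ≤ d) : (QF d k).IsHomogeneous d := by
  have h1 : ∀ (c : ℝ) (i : Fin 3) (j : Fin 3), (X i - C c * X j : R3).IsHomogeneous 1 := by
    intro c i j
    refine (isHomogeneous_X ℝ i).sub ?_
    have := (isHomogeneous_C (Fin 3) c).mul (isHomogeneous_X ℝ j)
    simpa using this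
  have h2 : ((∏ i ∈ Finset.range k, (X 0 - C (i:ℝ) * X 2) : R3)).IsHomogeneous k := by
    have := IsHomogeneous.prod (Finset.range k) (fun i => (X 0 - C (i:ℝ) * X 2 : R3))
      (fun _ => 1) (fun i _ => h1 (i:ℝ) 0 2)
    simpa using this
  have h3 : ((∏ j ∈ Finset.range (d - k), (X 1 - C (j:ℝ) * X 2) : R3)).IsHomogeneous (d - k) := by
    have := IsHomogeneous.prod (Finset.range (d - k)) (fun j => (X 1 - C (j:ℝ) * X 2 : R3))
      (fun _ => 1) (fun j _ => h1 (j:ℝ) 1 2)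
    simpa using this
  have := h2.mul h3
  rwa [Nat.add_sub_cancel' hk] at this

-- dehomogenization
def Dmap : R3 →ₐ[ℝ] R2 := aeval ![X 0, X 1, 1]

lemma Dmap_QF (d k : ℕ) : Dmap (QF d k) = qP d k := by
  rw [QF, Dmap, map_mul, map_prod, map_prod, qP, NBP, nxP, nyP]
  congr 1
  · refine Finset.prod_congr rfl (fun i _ => ?_)
    rw [map_sub, map_mul, aeval_X, aeval_X, aeval_C]
    simp [algebraMap_eq]
  · refine Finset.prod_congr rfl (fun j _ => ?_)
    rw [map_sub, map_mul, aeval_X, aeval_X, aeval_C]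
    simp [algebraMap_eq]

lemma Dmap_totalDegree {d : ℕ} (p : R3) (hp : p.IsHomogeneous d) :
    (Dmap p).totalDegree ≤ d := by
  conv_lhs => rw [← support_sum_monomial_coeff p]
  rw [map_sum]
  refine le_trans (totalDegree_finset_sum _ _) ?_
  refine Finset.sup_le (fun m hm => ?_)
  have hmd : m 0 + m 1 ≤ d := by
    have h1 : (Finsupp.weight 1) m = d := hp (mem_support_iff.mp hm)
    have h2 : (Finsupp.weight 1) m = m.sum fun _ e => e := by
      simp [Finsupp.weight_apply]
    have h3 : (m.sum fun _ e => e) = ∑ i : Fin 3, m i :=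
      Finsupp.sum_fintype _ _ (fun i => rfl)
    have h4 : ∑ i : Fin 3, m i = m 0 + m 1 + m 2 := Fin.sum_univ_three _
    omega
  simp only [Dmap]
  rw [aeval_monomial]
  refine le_trans (totalDegree_mul _ _) ?_
  have hC : (algebraMap ℝ R2 (coeff m p)).totalDegree = 0 := totalDegree_C _
  rw [hC, zero_add]
  have hprod : (m.prod fun i k => (![X 0, X 1, 1] : Fin 3 → R2) i ^ k)
      = (X 0 : R2) ^ (m 0) * (X 1) ^ (m 1) * 1 ^ (m 2) := by
    rw [Finsupp.prod_fintype _ _ (fun i => pow_zero _), Fin.prod_univ_three]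
    rfl
  rw [hprod, one_pow, mul_one]
  refine le_trans (totalDegree_mul _ _) ?_
  have e0 : ((X 0 : R2) ^ (m 0)).totalDegree ≤ m 0 :=
    le_trans (totalDegree_pow _ _) (by rw [totalDegree_X]; omega)
  have e1 : ((X 1 : R2) ^ (m 1)).totalDegree ≤ m 1 :=
    le_trans (totalDegree_pow _ _) (by rw [totalDegree_X]; omega)
  omega

/-- Lower bound for the ternary Pythagoras number: for every `d ≥ 2` there is a
sum of squares of degree-`d` forms in `ℝ[x₁,x₂,x₃]` that is not a sum of `d`
squares, i.e. `ℓ(f) ≥ d + 1`; hence `p(3,2d) ≥ d + 1`. -/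
theorem ternary_lower_bound (d : ℕ) (hd : 2 ≤ d) :
    ∃ f : MvPolynomial (Fin 3) ℝ, InSigma 3 d f ∧ ¬ IsSOS 3 d d f ∧
      d + 1 ≤ sosLength 3 d f := by
  set f : R3 := ∑ i : Fin (d+1), (QF d i)^2 with hfdef
  have hsos : IsSOS 3 d (d+1) f :=
    ⟨fun i => QF d i, fun i => QF_homog (Fin.is_le i), rfl⟩
  have claim : ∀ r, IsSOS 3 d r f → d + 1 ≤ r := by
    rintro r ⟨p, hp, hf⟩
    refine keyLB (fun j => Dmap (p j)) (fun j => Dmap_totalDegree _ (hp j)) ?_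
    have h1 : ∑ j : Fin r, (Dmap (p j))^2 = Dmap f := by
      rw [hf, map_sum]
      exact Finset.sum_congr rfl (fun j _ => (map_pow _ _ _).symm)
    rw [h1, hfdef, map_sum]
    have h2 : ∀ i : Fin (d+1), Dmap ((QF d i)^2) = (qP d (i : ℕ))^2 := by
      intro i
      rw [map_pow, Dmap_QF]
    rw [Finset.sum_congr rfl (fun i _ => h2 i)]
    exact Fin.sum_univ_eq_sum_range (fun k => (qP d k)^2) (d+1)
  refine ⟨f, ⟨d+1, hsos⟩, ?_, ?_⟩
  · intro h
    have := claim d h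
    omega
  · exact le_csInf ⟨d+1, hsos⟩ (fun b hb => claim b hb)

end

-- axiom check
end

section
/- Let n ≥ 4 and d ≥ 2, write N_e := binom(n+e−1, n−1), and let s = s_min(n,d) be the smallest integer s satisfying binom(N_d − s + 1, 2) ≤ N_{2d} − n·s. Then N_{d−1} < s < N_d. -/
set_option maxHeartbeats 1000000

/-- `N_{n,e} = binom(n+e-1, n-1)`, the dimension of the space of `n`-ary forms
of degree `e`. -/
def formDim (n e : ℕ) : ℕ := (n + e - 1).choose (n - 1)

/-- The defining condition for `s_min(n,d)`: `binom(N_d - s + 1, 2) ≤ N_{2d} - n·s`,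
read in `ℤ` (with `binom(a,2) = a(a-1)/2`). -/
def sCond (n d : ℕ) (s : ℤ) : Prop :=
  ((formDim n d : ℤ) - s + 1) * ((formDim n d : ℤ) - s) ≤
    2 * ((formDim n (2 * d) : ℤ) - n * s)

lemma chooseTwo (a : ℕ) : (a+2).choose 2 * 2 = (a+2)*(a+1) := by
  have h := Nat.choose_succ_right_eq (a+2) 1
  rw [Nat.choose_one_right] at h
  simpa [show a+2-1 = a+1 by omega] using h

lemma chooseThree (a : ℕ) : (a+3).choose 3 * 6 = (a+3)*(a+2)*(a+1) := by
  have h := Nat.choose_succ_right_eq (a+3) 2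
  norm_num at h
  rw [show a+3-2 = a+1 by omega] at h
  have h2 : (a+3).choose 2 * 2 = (a+3)*(a+2) := chooseTwo (a+1)
  calc (a+3).choose 3 * 6 = ((a+3).choose 3 * 3)*2 := by ring
    _ = ((a+3).choose 2 * (a+1))*2 := by rw [h]
    _ = ((a+3).choose 2 * 2)*(a+1) := by ring
    _ = (a+3)*(a+2)*(a+1) := by rw [h2]

lemma Dge (m e : ℕ) : (m+4)*(m+3) ≤ 2*((m+e+4).choose (m+2)) := by
  have h0 : (m+4).choose (m+2) = (m+4).choose 2 := by
    have := Nat.choose_symm (show 2 ≤ m+4 by omega)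
    simpa [show m+4-2 = m+2 by omega] using this
  have h2 : (m+4).choose 2 * 2 = (m+4)*(m+3) := chooseTwo (m+2)
  have hmono : (m+4).choose (m+2) ≤ (m+e+4).choose (m+2) :=
    Nat.choose_le_choose _ (by omega)
  calc (m+4)*(m+3) = (m+4).choose 2 * 2 := h2.symm
    _ = 2 * ((m+4).choose (m+2)) := by rw [← h0]; ring
    _ ≤ 2*((m+e+4).choose (m+2)) := Nat.mul_le_mul_left _ hmono

lemma F3step (m e : ℕ)
    (h : (m+4) * ((m+e+5).choose (m+3)) ≤ (m+2*e+7).choose (m+3)) :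
    (m+5) * ((m+e+6).choose (m+4)) ≤ (m+2*e+8).choose (m+4) := by
  have hN : (m+e+6) * ((m+e+5).choose (m+3)) = ((m+e+6).choose (m+4)) * (m+4) :=
    Nat.add_one_mul_choose_eq (m+e+5) (m+3)
  have hM : (m+2*e+8) * ((m+2*e+7).choose (m+3)) = ((m+2*e+8).choose (m+4)) * (m+4) :=
    Nat.add_one_mul_choose_eq (m+2*e+7) (m+3)
  have key : ((m+4)*(m+e+6)) * ((m+5) * ((m+e+6).choose (m+4)))
      ≤ ((m+4)*(m+e+6)) * ((m+2*e+8).choose (m+4)) := by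
    calc ((m+4)*(m+e+6)) * ((m+5)*((m+e+6).choose (m+4)))
        = (m+5)*(m+e+6)*(((m+e+6).choose (m+4))*(m+4)) := by ring
      _ = (m+5)*(m+e+6)*((m+e+6) * ((m+e+5).choose (m+3))) := by rw [hN]
      _ ≤ (m+4)*(m+2*e+8)*((m+e+6) * ((m+e+5).choose (m+3))) := by
          exact Nat.mul_le_mul_right _ (by nlinarith)
      _ = (m+e+6)*(m+2*e+8)*((m+4) * ((m+e+5).choose (m+3))) := by ring
      _ ≤ (m+e+6)*(m+2*e+8)*((m+2*e+7).choose (m+3)) := Nat.mul_le_mul_left _ h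
      _ = (m+e+6)*((m+2*e+8)*((m+2*e+7).choose (m+3))) := by ring
      _ = (m+e+6)*(((m+2*e+8).choose (m+4))*(m+4)) := by rw [hM]
      _ = ((m+4)*(m+e+6))*((m+2*e+8).choose (m+4)) := by ring
  exact Nat.le_of_mul_le_mul_left key (by positivity)

lemma F4step (m e : ℕ)
    (h5 : (m+4)*(m+3) ≤ 2*((m+e+4).choose (m+2)))
    (h : 2*((m+2*e+7).choose (m+3)) <
      ((m+e+4).choose (m+2))^2 + (m+e+4).choose (m+2) + 2*(m+4)*((m+e+4).choose (m+3))) :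
    2*((m+2*e+8).choose (m+4)) <
      ((m+e+5).choose (m+3))^2 + (m+e+5).choose (m+3) + 2*(m+5)*((m+e+5).choose (m+4)) := by
  set D := (m+e+4).choose (m+2) with hDdef
  set A := (m+e+4).choose (m+3) with hAdef
  set M := (m+2*e+7).choose (m+3) with hMdef
  set D' := (m+e+5).choose (m+3) with hD'def
  set A' := (m+e+5).choose (m+4) with hA'def
  set M' := (m+2*e+8).choose (m+4) with hM'def
  have hD : (m+e+5) * D = D' * (m+3) := Nat.add_one_mul_choose_eq (m+e+4) (m+2)
  have hA : (m+e+5) * A = A' * (m+4) := Nat.add_one_mul_choose_eq (m+e+4) (m+3)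
  have hM : (m+2*e+8) * M = M' * (m+4) := Nat.add_one_mul_choose_eq (m+2*e+7) (m+3)
  have hDA : A * (m+3) = D * (e+2) := by
    have h0 := Nat.choose_succ_right_eq (m+e+4) (m+2)
    rw [show m+e+4-(m+2) = e+2 by omega] at h0
    exact h0
  have KEY : ((m+3)^2*(m+2*e+8))*(D^2+D+2*(m+4)*A)
      ≤ (m+4)*((m+e+5)*D)^2 + (m+3)*(m+4)*((m+e+5)*D) + 2*(m+5)*(m+3)^2*((m+e+5)*A) := by
    zify
    zify at hDA h5
    have hm0 : (0:ℤ) ≤ (m:ℤ) := by positivity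
    have he0 : (0:ℤ) ≤ (e:ℤ) := by positivity
    have hD0 : (0:ℤ) ≤ (D:ℤ) := by positivity
    have hint1 : (0:ℤ) ≤ ((e:ℤ)+2)*(((m:ℤ)+4)*((e:ℤ)+4)-2) * D * (2*D - ((m:ℤ)+4)*((m:ℤ)+3)) := by
      have hf : (0:ℤ) ≤ ((m:ℤ)+4)*((e:ℤ)+4)-2 := by nlinarith
      have := mul_nonneg (mul_nonneg (mul_nonneg (by linarith : (0:ℤ) ≤ (e:ℤ)+2) hf) hD0)
        (by linarith : (0:ℤ) ≤ 2*(D:ℤ) - ((m:ℤ)+4)*((m:ℤ)+3))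
      linarith [this]
    have hint2 : (0:ℤ) ≤ ((m:ℤ)+3)*D*(((e:ℤ)+2)*((e:ℤ)*(m:ℤ)^2+4*(e:ℤ)*(m:ℤ)+4*(e:ℤ)+4*(m:ℤ)^2+20*(m:ℤ)+24)) := by
      positivity
    have h6 : 4*((m:ℤ)+3)*(((m:ℤ)+4)*((e:ℤ)+2)-((e:ℤ)+1))*((A:ℤ)*((m:ℤ)+3))
        = 4*((m:ℤ)+3)*(((m:ℤ)+4)*((e:ℤ)+2)-((e:ℤ)+1))*((D:ℤ)*((e:ℤ)+2)) := by
      rw [hDA]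
    linarith [hint1, hint2, h6]
  have key2 : ((m+3)^2*(m+4))*(2*M') < ((m+3)^2*(m+4))*(D'^2+D'+2*(m+5)*A') := by
    calc ((m+3)^2*(m+4))*(2*M') = 2*(m+3)^2*(M'*(m+4)) := by ring
      _ = 2*(m+3)^2*((m+2*e+8)*M) := by rw [hM]
      _ = ((m+3)^2*(m+2*e+8))*(2*M) := by ring
      _ < ((m+3)^2*(m+2*e+8))*(D^2+D+2*(m+4)*A) := by
          exact mul_lt_mul_of_pos_left h (by positivity)
      _ ≤ (m+4)*((m+e+5)*D)^2 + (m+3)*(m+4)*((m+e+5)*D) + 2*(m+5)*(m+3)^2*((m+e+5)*A) := KEY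
      _ = (m+4)*(D'*(m+3))^2 + (m+3)*(m+4)*(D'*(m+3)) + 2*(m+5)*(m+3)^2*(A'*(m+4)) := by
          rw [hD, hA]
      _ = ((m+3)^2*(m+4))*(D'^2+D'+2*(m+5)*A') := by ring
  exact lt_of_mul_lt_mul_left key2 (Nat.zero_le _)

lemma F3base1 (e : ℕ) : 4 * ((e+6).choose 3) ≤ (2*e+9).choose 3 := by
  have h1 : (e+6).choose 3 * 6 = (e+6)*(e+5)*(e+4) := chooseThree (e+3)
  have h2 : (2*e+9).choose 3 * 6 = (2*e+9)*(2*e+8)*(2*e+7) := chooseThree (2*e+6)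
  have key : 6*(4*((e+6).choose 3)) ≤ 6*((2*e+9).choose 3) := by
    have e1 : 6*(4*((e+6).choose 3)) = 4*((e+6).choose 3 * 6) := by ring
    have e2 : 6*((2*e+9).choose 3) = (2*e+9).choose 3 * 6 := by ring
    rw [e1, e2, h1, h2]
    nlinarith
  linarith

lemma F4base (e : ℕ) : 2*((2*e+7).choose 3) <
    ((e+4).choose 2)^2 + (e+4).choose 2 + 2*4*((e+4).choose 3) := by
  have h2 : (e+4).choose 2 * 2 = (e+4)*(e+3) := chooseTwo (e+2)
  have h3 : (e+4).choose 3 * 6 = (e+4)*(e+3)*(e+2) := chooseThree (e+1)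
  have hM : (2*e+7).choose 3 * 6 = (2*e+7)*(2*e+6)*(2*e+5) := chooseThree (2*e+4)
  have key : 36*(2*((2*e+7).choose 3)) <
      36*(((e+4).choose 2)^2 + (e+4).choose 2 + 2*4*((e+4).choose 3)) := by
    have e1 : 36*(((e+4).choose 2)^2 + (e+4).choose 2 + 2*4*((e+4).choose 3))
        = 9*(((e+4).choose 2 * 2)*((e+4).choose 2 * 2)) + 18*((e+4).choose 2 * 2)
          + 48*((e+4).choose 3 * 6) := by ring
    have e2 : 36*(2*((2*e+7).choose 3)) = 12*((2*e+7).choose 3 * 6) := by ring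
    rw [e1, e2, h2, h3, hM]
    nlinarith
  linarith

lemma F3e0 (k : ℕ) : (k+6)*((k+7).choose (k+5)) ≤ (k+9).choose (k+5) := by
  induction k with
  | zero => decide
  | succ k ih => exact F3step (k+2) 0 ih

lemma F3e1 (m e : ℕ) : (m+4)*((m+e+6).choose (m+3)) ≤ (m+2*e+9).choose (m+3) := by
  induction m with
  | zero =>
      simp only [Nat.zero_add]
      exact F3base1 e
  | succ m ih =>
      have h2 := F3step m (e+1) ih
      simpa only [show (m+1)+e+6 = m+(e+1)+6 by omega,
        show (m+1)+2*e+9 = m+2*(e+1)+8 by omega] using h2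

lemma F3' (m e : ℕ) : 2*(m+4)*((m+e+5).choose (m+3))
    ≤ 2*((m+2*e+7).choose (m+3)) + (m+4)*(m+3) := by
  rcases e with _ | e
  · rcases Nat.lt_or_ge m 2 with hm | hm
    · interval_cases m <;> decide
    · obtain ⟨k, rfl⟩ : ∃ k, m = k+2 := ⟨m-2, by omega⟩
      have h := F3e0 k
      show 2*(k+6)*((k+7).choose (k+5)) ≤ 2*((k+9).choose (k+5)) + (k+6)*(k+5)
      nlinarith [h, Nat.zero_le ((k+6)*(k+5))]
  · have h := F3e1 m e
    show 2*(m+4)*((m+e+6).choose (m+3)) ≤ 2*((m+2*e+9).choose (m+3)) + (m+4)*(m+3)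
    nlinarith [h, Nat.zero_le ((m+4)*(m+3))]

lemma F4e (m e : ℕ) : 2*((m+2*e+7).choose (m+3)) <
    ((m+e+4).choose (m+2))^2 + (m+e+4).choose (m+2) + 2*(m+4)*((m+e+4).choose (m+3)) := by
  induction m with
  | zero =>
      simp only [Nat.zero_add]
      exact F4base e
  | succ m ih =>
      have h2 := F4step m e (Dge m e) ih
      simpa only [show (m+1)+e+4 = m+e+5 by omega,
        show (m+1)+2*e+7 = m+2*e+8 by omega] using h2

/-- For `n ≥ 4`, `d ≥ 2`, the smallest integer `s = s_min(n,d)` with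
`binom(N_d - s + 1, 2) ≤ N_{2d} - n·s` satisfies `N_{d-1} < s < N_d`. -/
theorem sMin_between (n d : ℕ) (hn : 4 ≤ n) (hd : 2 ≤ d) (s : ℤ)
    (hs : sCond n d s) (hmin : ∀ s' : ℤ, sCond n d s' → s ≤ s') :
    (formDim n (d - 1) : ℤ) < s ∧ s < (formDim n d : ℤ) := by
  obtain ⟨m, rfl⟩ : ∃ m, n = m + 4 := ⟨n - 4, by omega⟩
  obtain ⟨e, rfl⟩ : ∃ e, d = e + 2 := ⟨d - 2, by omega⟩
  have hN : formDim (m+4) (e+2) = (m+e+5).choose (m+3) := by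
    unfold formDim; congr 1 <;> omega
  have hA : formDim (m+4) (e+2-1) = (m+e+4).choose (m+3) := by
    unfold formDim; congr 1 <;> omega
  have hM : formDim (m+4) (2*(e+2)) = (m+2*e+7).choose (m+3) := by
    unfold formDim; congr 1 <;> omega
  set N := (m+e+5).choose (m+3) with hNdef
  set A := (m+e+4).choose (m+3) with hAdef
  set D := (m+e+4).choose (m+2) with hDdef
  set M := (m+2*e+7).choose (m+3) with hMdef
  have hP : N = D + A := Nat.choose_succ_succ (m+e+4) (m+2)
  have hPz : (N:ℤ) = (D:ℤ) + (A:ℤ) := by exact_mod_cast hP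
  have hDgez : ((m:ℤ)+4)*((m:ℤ)+3) ≤ 2*(D:ℤ) := by exact_mod_cast Dge m e
  have hF3z : 2*((m:ℤ)+4)*(N:ℤ) ≤ 2*(M:ℤ) + ((m:ℤ)+4)*((m:ℤ)+3) := by
    exact_mod_cast F3' m e
  have hF4z : 2*(M:ℤ) < (D:ℤ)^2 + (D:ℤ) + 2*((m:ℤ)+4)*(A:ℤ) := by
    exact_mod_cast F4e m e
  have hm0 : (0:ℤ) ≤ (m:ℤ) := by positivity
  -- the condition holds at b := N - (m+4)
  have hb : sCond (m+4) (e+2) ((N:ℤ) - ((m:ℤ)+4)) := by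
    unfold sCond
    rw [hN, hM]
    push_cast
    nlinarith [hF3z]
  have hub : s ≤ (N:ℤ) - ((m:ℤ)+4) := hmin _ hb
  constructor
  · -- lower bound
    rw [hA]
    by_contra hcon
    push_neg at hcon
    -- hcon : s ≤ A
    unfold sCond at hs hb
    rw [hN, hM] at hs hb
    push_cast at hs hb
    set b : ℤ := (N:ℤ) - ((m:ℤ)+4) with hbdef
    have hNA : (N:ℤ) - (A:ℤ) = (D:ℤ) := by linarith
    have hqA : 0 < ((N:ℤ) - (A:ℤ) + 1)*((N:ℤ) - (A:ℤ)) - 2*((M:ℤ) - ((m:ℤ)+4)*(A:ℤ)) := by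
      rw [hNA]
      nlinarith [hF4z]
    have hAb : (A:ℤ) + 1 ≤ b := by nlinarith [hDgez, hPz, sq_nonneg ((m:ℤ)), hm0]
    have hbs : 0 < b - s := by linarith
    have t1 : 0 ≤ (b - (A:ℤ)) * (2*((M:ℤ) - ((m:ℤ)+4)*s) - ((N:ℤ) - s + 1)*((N:ℤ) - s)) :=
      mul_nonneg (by linarith) (by linarith [hs])
    have t2 : 0 ≤ ((A:ℤ) - s) * (2*((M:ℤ) - ((m:ℤ)+4)*b) - ((N:ℤ) - b + 1)*((N:ℤ) - b)) :=
      mul_nonneg (by linarith) (by linarith [hb])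
    have t3 : 0 ≤ ((A:ℤ) - s)*(b - (A:ℤ))*(b - s) :=
      mul_nonneg (mul_nonneg (by linarith) (by linarith)) (by linarith)
    have t4 : 0 < (((N:ℤ) - (A:ℤ) + 1)*((N:ℤ) - (A:ℤ)) - 2*((M:ℤ) - ((m:ℤ)+4)*(A:ℤ))) * (b - s) :=
      mul_pos hqA hbs
    nlinarith [t1, t2, t3, t4]
  · -- upper bound
    rw [hN]
    have : (0:ℤ) < (m:ℤ) + 4 := by positivity
    linarith
end
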